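/- arXiv:1101.1993 — 3 statements merged into one kernel-verified Lean document; each statement's English description precedes it below -/
import Mathlib

section
/- Let (G̃, G) be a ℤ/2-pair with covering projection π : G̃ → G. Then for every edge e of G, removing the edge set w_e = π^{−1}(e) from G̃ separates G̃ into exactly two connected components; consequently W = { w_e : e ∈ E(G) } is a wall structure on G̃ (every edge of G̃ lies in exactly one wall of W). -/
/-- A multigraph: a set of vertices `V`, a set of edges `E`, and two endpoint maps.
The pair `(src e, tgt e)` records an (arbitrary) orientation of the unoriented edge `e`;
graphs are regarded as unoriented. -/
structure Multigraph (V E : Type) where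
  src : E → V
  tgt : E → V

namespace Multigraph

variable {V E : Type}

/-- The edge `e` is an edge between `u` and `v` (in either direction). -/
def EndsAt (G : Multigraph V E) (e : E) (u v : V) : Prop :=
  (G.src e = u ∧ G.tgt e = v) ∨ (G.src e = v ∧ G.tgt e = u)

/-- A path (walk) in a multigraph from `u` to `v`: a sequence
`(v₀, e₁, v₁, …, e_n, v_n)` where each `e_i` is an edge between `v_{i-1}` and `v_i`. -/
inductive Walk (G : Multigraph V E) : V → V → Type
  | nil (v : V) : Walk G v v
  | cons {u v w : V} (e : E) (h : G.EndsAt e u v) (p : Walk G v w) : Walk G u w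

namespace Walk

variable {G : Multigraph V E}

/-- The length of a path. -/
def length : ∀ {u v : V}, G.Walk u v → ℕ
  | _, _, .nil _ => 0
  | _, _, .cons _ _ p => length p + 1

/-- The list of edges of a path. -/
def edges : ∀ {u v : V}, G.Walk u v → List E
  | _, _, .nil _ => []
  | _, _, .cons e _ p => e :: edges p

/-- The list of vertices of a path (including the first one). -/
def verts : ∀ {u v : V}, G.Walk u v → List V
  | _, _, .nil v => [v]
  | u, _, .cons _ _ p => u :: verts p

/-- A path has a backtrack if for some `i` it traverses the same edge at steps
`i+1` and `i+2` returning to the same vertex, i.e. `v_i = v_{i+2}` and `e_{i+1} = e_{i+2}`. -/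
def HasBacktrack {u v : V} (p : G.Walk u v) : Prop :=
  ∃ i : ℕ, i + 1 < p.edges.length ∧ p.edges[i]? = p.edges[i + 1]? ∧
    p.verts[i]? = p.verts[i + 2]?

end Walk

/-- A multigraph is connected if any two vertices are joined by a path. -/
def Connected (G : Multigraph V E) : Prop := ∀ u v : V, Nonempty (G.Walk u v)

/-- `u` and `v` can be joined by a path avoiding all edges in `F`. -/
def ReachAvoid (G : Multigraph V E) (F : Set E) (u v : V) : Prop :=
  ∃ p : G.Walk u v, ∀ e ∈ p.edges, e ∉ F

/-- A set of edges `w` is a wall (a cut) if removing these edges from the graph separates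
it into exactly two connected components (the associated half-spaces `A` and `B`). -/
def IsWall (G : Multigraph V E) (w : Set E) : Prop :=
  ∃ A B : Set V, A.Nonempty ∧ B.Nonempty ∧ Disjoint A B ∧ A ∪ B = Set.univ ∧
    ∀ u v : V, G.ReachAvoid w u v ↔ ((u ∈ A ∧ v ∈ A) ∨ (u ∈ B ∧ v ∈ B))

/-- A wall structure: a set of walls such that every edge belongs to exactly one wall. -/
def IsWallStructure (G : Multigraph V E) (W : Set (Set E)) : Prop :=
  (∀ w ∈ W, G.IsWall w) ∧ ∀ e : E, ∃! w, w ∈ W ∧ e ∈ w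

/-- The set of edges `w` separates `u` from `v` if after removing `w` there is
no path from `u` to `v` (i.e. they lie in different half-spaces). -/
def Separates (G : Multigraph V E) (w : Set E) (u v : V) : Prop :=
  ¬ G.ReachAvoid w u v

/-- The wall pseudometric associated with a wall structure `W`:
the number of walls of `W` separating `x` from `y`. -/
noncomputable def wallDistOf (G : Multigraph V E) (W : Set (Set E)) (x y : V) : ℕ :=
  {w : Set E | w ∈ W ∧ G.Separates w x y}.ncard

/-- The graph metric: the length of a shortest path between two vertices. -/
noncomputable def graphDist (G : Multigraph V E) (u v : V) : ℕ :=
  sInf {n : ℕ | ∃ p : G.Walk u v, p.length = n}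

/-- A simple loop: a closed path of positive length with no repeated edges and no
repeated vertices (except that the first and last vertex coincide). -/
def IsSimpleLoop (G : Multigraph V E) {v : V} (p : G.Walk v v) : Prop :=
  0 < p.length ∧ p.edges.Nodup ∧ p.verts.dropLast.Nodup

/-- The girth of a multigraph: the length of a shortest simple loop. -/
noncomputable def girth (G : Multigraph V E) : ℕ :=
  sInf {n : ℕ | ∃ (v : V) (p : G.Walk v v), G.IsSimpleLoop p ∧ p.length = n}

end Multigraph

namespace Multigraph

variable {V E : Type}

/-- A graph is 2-connected if removing any single edge does not disconnect it
(equivalently, every edge lies on a simple loop). -/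
def TwoConnected (G : Multigraph V E) : Prop :=
  G.Connected ∧ ∀ (e : E) (u v : V), G.ReachAvoid {e} u v

/-- `T` is (the edge set of) a spanning tree of the finite graph `G`: the edges of `T`
connect all vertices of `G` and `|T| = |V(G)| - 1` (so the subgraph on `T` is a tree). -/
def IsSpanningTree [Fintype V] (G : Multigraph V E) (T : Finset E) : Prop :=
  (∀ u v : V, ∃ p : G.Walk u v, ∀ e ∈ p.edges, e ∈ T) ∧ T.card + 1 = Fintype.card V

variable [Fintype E] [DecidableEq E]

/-- Given a spanning tree `T` with `S = E \ T = Tᶜ`, crossing the edge `e` changes the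
second coordinate `τ ⊆ S` of a vertex of the `ℤ/2`-homology cover to `τ △ {e}` if `e ∈ S`,
and leaves it unchanged if `e ∈ T`. -/
def tauStep (T : Finset E) (e : E) (τ : {τ : Finset E // τ ⊆ Tᶜ}) :
    {τ : Finset E // τ ⊆ Tᶜ} :=
  if he : e ∈ Tᶜ then
    ⟨symmDiff τ.1 {e}, fun x hx => by
      rcases Finset.mem_symmDiff.mp hx with ⟨h1, _⟩ | ⟨h1, _⟩
      · exact τ.2 h1
      · rwa [Finset.mem_singleton.mp h1]⟩
  else τ

/-- The `ℤ/2`-homology cover of `G` associated with the spanning tree `T` (with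
`S = Tᶜ`): vertices are `V × 𝒫(S)`, edges are `E × 𝒫(S)`, where the edge `(e, τ)`
joins `(x, τ)` to `(y, τ)` if `e ∉ S`, and `(x, τ)` to `(y, τ △ {e})` if `e ∈ S`
with the orientation `x → y`. -/
def cover (G : Multigraph V E) (T : Finset E) :
    Multigraph (V × {τ : Finset E // τ ⊆ Tᶜ}) (E × {τ : Finset E // τ ⊆ Tᶜ}) where
  src p := (G.src p.1, p.2)
  tgt p := (G.tgt p.1, tauStep T p.1 p.2)

/-- The covering projection maps paths in the cover to paths in the base graph,
forgetting the second coordinates. -/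
def projWalk {G : Multigraph V E} {T : Finset E} :
    ∀ {x y : V × {τ : Finset E // τ ⊆ Tᶜ}}, (cover G T).Walk x y → G.Walk x.1 y.1
  | _, _, .nil v => .nil v.1
  | _, _, .cons e h p =>
      .cons e.1
        (by
          rcases h with ⟨h1, h2⟩ | ⟨h1, h2⟩
          · exact Or.inl ⟨congrArg Prod.fst h1, congrArg Prod.fst h2⟩
          · exact Or.inr ⟨congrArg Prod.fst h1, congrArg Prod.fst h2⟩)
        (projWalk p)

/-- A path `p` in `G` from `x₀` to `y₀` is `(x,y)`-admissible (for vertices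
`x = (x₀, τ_x)`, `y = (y₀, τ_y)` of the cover) if for every `e ∈ S = Tᶜ`, the number
of occurrences of `e` among the edges of `p` is odd when `e ∈ τ_x △ τ_y` and even
otherwise. -/
def Admissible (G : Multigraph V E) (T : Finset E)
    (x y : V × {τ : Finset E // τ ⊆ Tᶜ}) (p : G.Walk x.1 y.1) : Prop :=
  ∀ e ∈ (Tᶜ : Finset E),
    p.edges.count e % 2 = if e ∈ symmDiff x.2.1 y.2.1 then 1 else 0

/-- The wall `w_e = π⁻¹(e)` of the `ℤ/2`-homology cover associated to an edge `e` of
the base graph. -/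
def wallOf (G : Multigraph V E) (T : Finset E) (e : E) :
    Set (E × {τ : Finset E // τ ⊆ Tᶜ}) := {f | f.1 = e}

/-- The wall metric on the `ℤ/2`-homology cover: the number of walls
`w_e = π⁻¹(e)`, `e ∈ E(G)`, separating `x` from `y`. -/
noncomputable def wallDist (G : Multigraph V E) (T : Finset E)
    (x y : V × {τ : Finset E // τ ⊆ Tᶜ}) : ℕ :=
  {e : E | (cover G T).Separates (wallOf G T e) x y}.ncard

end Multigraph

namespace Multigraph

variable {V E : Type}

lemma EndsAt.symm {G : Multigraph V E} {e : E} {u v : V} (h : G.EndsAt e u v) :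
    G.EndsAt e v u := h.elim (fun h => Or.inr h) (fun h => Or.inl h)

namespace Walk

variable {G : Multigraph V E}

def append : ∀ {u v w : V}, G.Walk u v → G.Walk v w → G.Walk u w
  | _, _, _, .nil _, q => q
  | _, _, _, .cons e h p, q => .cons e h (p.append q)

@[simp] lemma edges_append : ∀ {u v w : V} (p : G.Walk u v) (q : G.Walk v w),
    (p.append q).edges = p.edges ++ q.edges
  | _, _, _, .nil _, _ => rfl
  | _, _, _, .cons e h p, q => by
      simp [append, edges, edges_append p q]

def reverse : ∀ {u v : V}, G.Walk u v → G.Walk v u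
  | _, _, .nil v => .nil v
  | _, _, .cons e h p => (reverse p).append (.cons e h.symm (.nil _))

@[simp] lemma edges_reverse : ∀ {u v : V} (p : G.Walk u v),
    (reverse p).edges = p.edges.reverse
  | _, _, .nil _ => rfl
  | _, _, .cons e h p => by
      simp [reverse, edges, edges_reverse p]

def copy {u v u' v' : V} (p : G.Walk u v) (hu : u = u') (hv : v = v') : G.Walk u' v' :=
  hu ▸ hv ▸ p

@[simp] lemma edges_copy {u v u' v' : V} (p : G.Walk u v) (hu : u = u') (hv : v = v') :
    (p.copy hu hv).edges = p.edges := by subst hu; subst hv; rfl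

lemma eq_of_length_zero : ∀ {u v : V} (p : G.Walk u v), p.length = 0 → u = v
  | _, _, .nil _, _ => rfl
  | _, _, .cons _ _ _, h => by simp [length] at h

end Walk

/-- `u` and `v` are joined by a walk all of whose edges lie in `F`. -/
def ReachIn (G : Multigraph V E) (F : Set E) (u v : V) : Prop :=
  ∃ p : G.Walk u v, ∀ f ∈ p.edges, f ∈ F

lemma ReachIn.refl (G : Multigraph V E) (F : Set E) (u : V) : G.ReachIn F u u :=
  ⟨.nil u, by simp [Walk.edges]⟩

lemma ReachIn.symm {G : Multigraph V E} {F : Set E} {u v : V}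
    (h : G.ReachIn F u v) : G.ReachIn F v u := by
  obtain ⟨p, hp⟩ := h
  exact ⟨p.reverse, by simpa using hp⟩

lemma ReachIn.trans {G : Multigraph V E} {F : Set E} {u v w : V}
    (h : G.ReachIn F u v) (h' : G.ReachIn F v w) : G.ReachIn F u w := by
  obtain ⟨p, hp⟩ := h
  obtain ⟨q, hq⟩ := h'
  refine ⟨p.append q, ?_⟩
  simp only [Walk.edges_append, List.mem_append]
  rintro f (hf | hf)
  exacts [hp f hf, hq f hf]

end Multigraph
namespace Multigraph

variable {V E : Type} [DecidableEq V] [DecidableEq E]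

namespace Walk

variable {G : Multigraph V E}

/-- Replace every traversal of the edge `e` by the detour `D`. -/
def replaceEdge (e : E) (D : G.Walk (G.src e) (G.tgt e)) :
    ∀ {u v : V}, G.Walk u v → G.Walk u v
  | _, _, .nil v => .nil v
  | u, _, .cons f h p =>
      if hf : f = e then
        if hc : G.src e = u ∧ G.tgt e = _ then
          (D.copy hc.1 hc.2).append (replaceEdge e D p)
        else
          have h2 := (hf ▸ h).resolve_left hc
          (D.reverse.copy h2.2 h2.1).append (replaceEdge e D p)
      else .cons f h (replaceEdge e D p)

lemma replaceEdge_cons_self {e : E} {D : G.Walk (G.src e) (G.tgt e)} {u w x : V}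
    (h : G.EndsAt e u w) (p : G.Walk w x) :
    ∃ D' : G.Walk u w, (D'.edges = D.edges ∨ D'.edges = D.edges.reverse) ∧
      replaceEdge e D (.cons e h p) = D'.append (replaceEdge e D p) := by
  by_cases hc : G.src e = u ∧ G.tgt e = w
  · refine ⟨D.copy hc.1 hc.2, Or.inl (by simp), ?_⟩
    rw [replaceEdge, dif_pos rfl, dif_pos hc]
  · have h2 := h.resolve_left hc
    refine ⟨D.reverse.copy h2.2 h2.1, Or.inr (by simp), ?_⟩
    rw [replaceEdge, dif_pos rfl, dif_neg hc]

lemma replaceEdge_cons_ne {e : E} {D : G.Walk (G.src e) (G.tgt e)} {u w x : V}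
    {f : E} (hf : f ≠ e) (h : G.EndsAt f u w) (p : G.Walk w x) :
    replaceEdge e D (.cons f h p) = .cons f h (replaceEdge e D p) := by
  rw [replaceEdge, dif_neg hf]

lemma mem_replaceEdge {e : E} {D : G.Walk (G.src e) (G.tgt e)} :
    ∀ {u v : V} (p : G.Walk u v) (f : E), f ∈ (replaceEdge e D p).edges →
      (f ∈ p.edges ∧ f ≠ e) ∨ f ∈ D.edges
  | _, _, .nil _, f, hf => by simp [replaceEdge, edges] at hf
  | _, _, @Walk.cons _ _ _ u w x g h p, f, hf => by
      have IH : ∀ hf' : f ∈ (replaceEdge e D p).edges,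
          (f ∈ (Walk.cons g h p).edges ∧ f ≠ e) ∨ f ∈ D.edges := fun hf' => by
        rcases mem_replaceEdge p f hf' with ⟨h1, h2⟩ | h1
        · exact Or.inl ⟨List.mem_cons_of_mem _ h1, h2⟩
        · exact Or.inr h1
      by_cases hg : g = e
      · subst hg
        obtain ⟨D', hD', heq⟩ := replaceEdge_cons_self h p
        rw [heq, edges_append, List.mem_append] at hf
        rcases hf with hf | hf
        · rcases hD' with h' | h' <;> rw [h'] at hf
          · exact Or.inr hf
          · exact Or.inr (List.mem_reverse.mp hf)
        · exact IH hf
      · rw [replaceEdge_cons_ne hg] at hf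
        rcases List.mem_cons.mp hf with rfl | hf
        · exact Or.inl ⟨List.mem_cons_self, hg⟩
        · exact IH hf

lemma count_replaceEdge {e : E} {D : G.Walk (G.src e) (G.tgt e)} {s : E} (hs : s ≠ e) :
    ∀ {u v : V} (p : G.Walk u v),
      ((replaceEdge e D p).edges.count s) =
        p.edges.count s + p.edges.count e * D.edges.count s
  | _, _, .nil _ => by simp [replaceEdge, edges]
  | _, _, @Walk.cons _ _ _ u w x g h p => by
      by_cases hg : g = e
      · subst hg
        obtain ⟨D', hD', heq⟩ := replaceEdge_cons_self (D := D) h p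
        have hcnt : D'.edges.count s = D.edges.count s := by
          rcases hD' with h' | h' <;> simp [h']
        rw [heq, edges_append, List.count_append, hcnt, count_replaceEdge hs p]
        simp only [edges, List.count_cons]
        rw [if_neg (by simpa using Ne.symm hs), if_pos (by simp)]
        ring
      · rw [replaceEdge_cons_ne hg]
        simp only [edges, List.count_cons, count_replaceEdge hs p]
        have : ¬ (e == g) = true := by simpa using fun h' => hg h'.symm
        simp only [this, if_false, Ne.symm hg, beq_iff_eq, if_neg hg]
        ring

end Walk

end Multigraph
namespace Multigraph

variable {V E : Type} [DecidableEq V] [DecidableEq E]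

open Classical in
lemma card_le_of_reachIn [Fintype V] (G : Multigraph V E) (F : Finset E)
    (hcon : ∀ u v : V, G.ReachIn ↑F u v) : Fintype.card V ≤ F.card + 1 := by
  rcases isEmpty_or_nonempty V with hV | hV
  · simp [Fintype.card_eq_zero]
  rcases isEmpty_or_nonempty E with hE | hE
  · have hsub : ∀ u v : V, u = v := by
      intro u v
      obtain ⟨p, _⟩ := hcon u v
      cases p with
      | nil => rfl
      | cons e _ _ => exact absurd ⟨e⟩ (not_nonempty_iff.mpr hE)
    have : Fintype.card V ≤ 1 := Fintype.card_le_one_iff.mpr hsub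
    omega
  obtain ⟨v₀⟩ := hV
  set d : V → ℕ := fun v => sInf {n : ℕ | ∃ p : G.Walk v v₀, (∀ f ∈ p.edges, f ∈ F) ∧ p.length = n}
    with hd
  have hne : ∀ v : V, {n : ℕ | ∃ p : G.Walk v v₀, (∀ f ∈ p.edges, f ∈ F) ∧ p.length = n}.Nonempty := by
    intro v
    obtain ⟨p, hp⟩ := hcon v v₀
    exact ⟨p.length, p, fun f hf => by exact_mod_cast hp f hf, rfl⟩
  have key : ∀ v : V, v ≠ v₀ → ∃ f ∈ F, ∃ w : V, G.EndsAt f v w ∧ d w < d v := by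
    intro v hv
    have hmem := Nat.sInf_mem (hne v)
    obtain ⟨p, hp, hlen⟩ := hmem
    cases p with
    | nil => exact absurd rfl hv
    | cons f h q =>
        refine ⟨f, by exact_mod_cast hp f List.mem_cons_self, _, h, ?_⟩
        have hq : d _ ≤ q.length := Nat.sInf_le ⟨q, fun g hg => hp g (List.mem_cons_of_mem _ hg), rfl⟩
        have : q.length + 1 = d v := by simpa [Walk.length] using hlen
        omega
  choose! f hfF w hfw hdw using key
  have hinj : Set.InjOn f {v : V | v ≠ v₀} := by
    intro a ha b hb hab
    by_contra hne'
    have h1 := hfw a ha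
    have h2 := hfw b hb
    have hda := hdw a ha
    have hdb := hdw b hb
    rw [hab] at h1
    rcases h1 with ⟨hs1, ht1⟩ | ⟨hs1, ht1⟩ <;> rcases h2 with ⟨hs2, ht2⟩ | ⟨hs2, ht2⟩
    · exact hne' (hs1.symm.trans hs2)
    · have e1 : w a = b := by rw [← ht1, ht2]
      have e2 : w b = a := by rw [← hs2, hs1]
      rw [e1] at hda; rw [e2] at hdb; omega
    · have e1 : w a = b := by rw [← hs1, hs2]
      have e2 : w b = a := by rw [← ht2, ht1]
      rw [e1] at hda; rw [e2] at hdb; omega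
    · exact hne' (ht1.symm.trans ht2)
  have hcard : (Finset.univ.erase v₀).card ≤ F.card := by
    refine Finset.card_le_card_of_injOn f (fun a ha => ?_) ?_
    · exact hfF a (Finset.ne_of_mem_erase ha)
    · intro a ha b hb hab
      exact hinj (Finset.ne_of_mem_erase ha) (Finset.ne_of_mem_erase hb) hab
  have h1 : (Finset.univ.erase v₀).card = Fintype.card V - 1 := by
    rw [Finset.card_erase_of_mem (Finset.mem_univ _), Finset.card_univ]
  have h2 : 1 ≤ Fintype.card V := Fintype.card_pos_iff.mpr ⟨v₀⟩
  omega

end Multigraph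
namespace Multigraph

variable {V E : Type} [Fintype V] [Fintype E] [DecidableEq V] [DecidableEq E]

open Classical in
/-- Indicator of the side of the tree-cut of `e` containing a vertex. -/
noncomputable def chi (G : Multigraph V E) (T : Finset E) (e : E) (v : V) : ZMod 2 :=
  if G.ReachIn ↑(T.erase e) (G.src e) v then 0 else 1

/-- Indicator of whether the edge `s` crosses the tree-cut of `e`. -/
noncomputable def crossInd (G : Multigraph V E) (T : Finset E) (e s : E) : ZMod 2 :=
  chi G T e (G.src s) + chi G T e (G.tgt s)

variable {G : Multigraph V E} {T : Finset E}

lemma chi_eq_of_reachIn {e : E} {u v : V} (h : G.ReachIn ↑(T.erase e) u v) :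
    chi G T e u = chi G T e v := by
  unfold chi
  split_ifs with h1 h2 h2
  · rfl
  · exact absurd (h1.trans h) h2
  · exact absurd (h2.trans h.symm) h1
  · rfl

lemma chi_src (e : E) : chi G T e (G.src e) = 0 := by
  unfold chi
  rw [if_pos (ReachIn.refl _ _ _)]

lemma chi_tgt (hT : G.IsSpanningTree T) {e : E} (he : e ∈ T) :
    chi G T e (G.tgt e) = 1 := by
  unfold chi
  rw [if_neg]
  intro hreach
  obtain ⟨D, hD⟩ := hreach
  have hcon : ∀ u v : V, G.ReachIn ↑(T.erase e) u v := by
    intro u v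
    obtain ⟨p, hp⟩ := hT.1 u v
    refine ⟨Walk.replaceEdge e D p, fun f hf => ?_⟩
    rcases Walk.mem_replaceEdge p f hf with ⟨h1, h2⟩ | h1
    · exact_mod_cast Finset.mem_erase.mpr ⟨h2, hp f h1⟩
    · exact hD f h1
  have hcard := card_le_of_reachIn G (T.erase e) hcon
  rw [Finset.card_erase_of_mem he] at hcard
  have h1 : 1 ≤ T.card := Finset.card_pos.mpr ⟨e, he⟩
  have h2 := hT.2
  omega

lemma chi_step (hT : G.IsSpanningTree T) {e : E} (he : e ∈ T) {f : E} (hf : f ∈ T) :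
    chi G T e (G.src f) + chi G T e (G.tgt f) = if f = e then 1 else 0 := by
  by_cases hfe : f = e
  · subst hfe
    rw [chi_src, chi_tgt hT he, if_pos rfl, zero_add]
  · have : G.ReachIn ↑(T.erase e) (G.src f) (G.tgt f) := by
      refine ⟨.cons f (Or.inl ⟨rfl, rfl⟩) (.nil _), fun g hg => ?_⟩
      simp only [Walk.edges, List.mem_cons, List.not_mem_nil, or_false] at hg
      subst hg
      exact_mod_cast Finset.mem_erase.mpr ⟨hfe, hf⟩
    rw [chi_eq_of_reachIn this, if_neg hfe]
    exact CharTwo.add_self_eq_zero _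

lemma chi_walk {e : E} : ∀ {u v : V} (p : G.Walk u v),
    chi G T e v = chi G T e u + (p.edges.map (crossInd G T e)).sum
  | _, _, .nil _ => by simp [Walk.edges]
  | _, _, .cons f h p => by
      rw [chi_walk p]
      simp only [Walk.edges, List.map_cons, List.sum_cons]
      have hstep : ∀ a b : V, G.EndsAt f a b →
          chi G T e b = chi G T e a + crossInd G T e f := by
        intro a b hab
        rcases hab with ⟨h1, h2⟩ | ⟨h1, h2⟩ <;> subst h1 <;> subst h2 <;> unfold crossInd
        · have : ∀ x y : ZMod 2, y = x + (x + y) := by decide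
          exact this _ _
        · have : ∀ x y : ZMod 2, x = y + (x + y) := by decide
          exact this _ _
      rw [hstep _ _ h]
      ring

end Multigraph
namespace Multigraph

variable {V E : Type} [Fintype V] [Fintype E] [DecidableEq V] [DecidableEq E]

/-- The parity (side) function of the wall `w_e` on the vertices of the cover. -/
noncomputable def phi (G : Multigraph V E) (T : Finset E) (e : E)
    (x : V × {τ : Finset E // τ ⊆ Tᶜ}) : ZMod 2 :=
  if e ∈ T then chi G T e x.1 + ∑ s ∈ x.2.1, crossInd G T e s
  else if e ∈ x.2.1 then 1 else 0

open scoped symmDiff in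
lemma sum_symmDiff_char2 (A B : Finset E) (g : E → ZMod 2) :
    ∑ s ∈ symmDiff A B, g s = (∑ s ∈ A, g s) + ∑ s ∈ B, g s := by
  classical
  have hdisj : Disjoint (A ∆ B) (A ∩ B) := disjoint_symmDiff_inf A B
  have hunion : A ∆ B ∪ A ∩ B = A ∪ B := by
    simpa using symmDiff_sup_inf A B
  have h1 : (∑ s ∈ A ∪ B, g s) + ∑ s ∈ A ∩ B, g s = (∑ s ∈ A, g s) + ∑ s ∈ B, g s :=
    Finset.sum_union_inter
  have h2 : ∑ s ∈ A ∪ B, g s = (∑ s ∈ A ∆ B, g s) + ∑ s ∈ A ∩ B, g s := by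
    rw [← hunion, Finset.sum_union hdisj]
  rw [h2] at h1
  rw [← h1, add_assoc, CharTwo.add_self_eq_zero, add_zero]

variable {G : Multigraph V E} {T : Finset E}

lemma phi_step (hT : G.IsSpanningTree T) (e : E) (F : E × {τ : Finset E // τ ⊆ Tᶜ}) :
    phi G T e ((cover G T).tgt F) = phi G T e ((cover G T).src F) +
      (if F.1 = e then 1 else 0) := by
  obtain ⟨f, τ⟩ := F
  simp only [cover, phi, tauStep]
  by_cases he : e ∈ T
  · have he' : e ∉ (Tᶜ : Finset E) := by simp [he]
    rw [if_pos he, if_pos he]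
    by_cases hf : f ∈ (Tᶜ : Finset E)
    · have hfe : f ≠ e := fun h => he' (h ▸ hf)
      rw [dif_pos hf]
      simp only
      rw [sum_symmDiff_char2 τ.1 ({f} : Finset E), Finset.sum_singleton, if_neg hfe]
      have hcw : chi G T e (G.tgt f) = chi G T e (G.src f) + crossInd G T e f := by
        unfold crossInd
        have : ∀ x y : ZMod 2, y = x + (x + y) := by decide
        exact this _ _
      rw [hcw]
      have key : ∀ a c s : ZMod 2, (a + c) + (s + c) = a + s + 0 := by decide
      exact key _ _ _
    · have hfT : f ∈ T := by simpa using hf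
      rw [dif_neg hf]
      have := chi_step hT he hfT
      have hcw : chi G T e (G.tgt f) = chi G T e (G.src f) + (if f = e then 1 else 0) := by
        have h2 : ∀ x y z : ZMod 2, x + y = z → y = x + z := by decide
        exact h2 _ _ _ this
      rw [hcw]
      ring
  · rw [if_neg he, if_neg he]
    by_cases hf : f ∈ (Tᶜ : Finset E)
    · rw [dif_pos hf]
      simp only [Finset.mem_symmDiff, Finset.mem_singleton]
      by_cases hef : f = e
      · subst hef
        by_cases hm : f ∈ τ.1 <;> simp [hm] <;> decide
      · have : e ≠ f := fun h => hef h.symm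
        by_cases hm : e ∈ τ.1 <;> simp [hm, this, hef]
    · have : f ≠ e := by rintro rfl; exact hf (by simpa using he)
      rw [dif_neg hf, if_neg this, add_zero]
      rfl

lemma phi_walk (hT : G.IsSpanningTree T) (e : E) :
    ∀ {x y : V × {τ : Finset E // τ ⊆ Tᶜ}} (q : (cover G T).Walk x y),
      phi G T e y = phi G T e x +
        (q.edges.map (fun F => if F.1 = e then (1 : ZMod 2) else 0)).sum
  | _, _, .nil _ => by simp [Walk.edges]
  | _, _, .cons F h q => by
      rw [phi_walk hT e q]
      simp only [Walk.edges, List.map_cons, List.sum_cons]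
      have hstep : ∀ a b, (cover G T).EndsAt F a b →
          phi G T e b = phi G T e a + (if F.1 = e then (1 : ZMod 2) else 0) := by
        intro a b hab
        have := phi_step hT e F
        rcases hab with ⟨h1, h2⟩ | ⟨h1, h2⟩ <;> subst h1 <;> subst h2
        · exact this
        · rw [this]
          have : ∀ x y : ZMod 2, x = (x + y) + y := by decide
          exact this _ _
      rw [hstep _ _ h]
      ring

lemma phi_eq_of_reachAvoid (hT : G.IsSpanningTree T) (e : E)
    {x y : V × {τ : Finset E // τ ⊆ Tᶜ}}
    (h : (cover G T).ReachAvoid (wallOf G T e) x y) : phi G T e x = phi G T e y := by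
  obtain ⟨q, hq⟩ := h
  rw [phi_walk hT e q]
  have : (q.edges.map (fun F => if F.1 = e then (1 : ZMod 2) else 0)).sum = 0 := by
    rw [List.sum_eq_zero]
    intro z hz
    simp only [List.mem_map] at hz
    obtain ⟨F, hF, rfl⟩ := hz
    have hne : F.1 ≠ e := hq F hF
    rw [if_neg hne]
  rw [this, add_zero]

end Multigraph
namespace Multigraph

variable {V E : Type} [Fintype E] [DecidableEq V] [DecidableEq E]

lemma tauStep_invol (T : Finset E) (e : E) (τ : {τ : Finset E // τ ⊆ Tᶜ}) :
    tauStep T e (tauStep T e τ) = τ := by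
  unfold tauStep
  by_cases he : e ∈ Tᶜ
  · rw [dif_pos he, dif_pos he]
    exact Subtype.ext (symmDiff_symmDiff_cancel_right _ _)
  · rw [dif_neg he, dif_neg he]

lemma mem_tauStep (T : Finset E) (e : E) (τ : {τ : Finset E // τ ⊆ Tᶜ}) (s : E) :
    s ∈ (tauStep T e τ).1 ↔ (if e ∈ (Tᶜ : Finset E) then
      ((s ∈ τ.1) ↔ ¬ s = e) ∧ (s ∈ τ.1 ∨ s = e) ∨ False else s ∈ τ.1) := by
  unfold tauStep
  by_cases he : e ∈ Tᶜ
  · rw [dif_pos he, if_pos he]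
    simp [Finset.mem_symmDiff, Finset.mem_singleton]
    tauto
  · rw [dif_neg he, if_neg he]

variable {G : Multigraph V E}

/-- The second coordinate of the endpoint of the lift of a walk. -/
def endTau (T : Finset E) : ∀ {u v : V}, G.Walk u v →
    {τ : Finset E // τ ⊆ Tᶜ} → {τ : Finset E // τ ⊆ Tᶜ}
  | _, _, .nil _, τ => τ
  | _, _, .cons e _ p, τ => endTau T p (tauStep T e τ)

lemma lift_exists (T : Finset E) : ∀ {u v : V} (p : G.Walk u v) (τ : {τ : Finset E // τ ⊆ Tᶜ}),
    ∃ q : (cover G T).Walk (u, τ) (v, endTau T p τ), ∀ F ∈ q.edges, F.1 ∈ p.edges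
  | _, _, .nil v, τ => ⟨.nil (v, τ), by simp [Walk.edges]⟩
  | _, _, @Walk.cons _ _ _ u w x e h p, τ => by
      obtain ⟨q, hq⟩ := lift_exists T p (tauStep T e τ)
      have hends : (cover G T).EndsAt
          (if G.src e = u then (e, τ) else (e, tauStep T e τ)) (u, τ) (w, tauStep T e τ) := by
        rcases h with ⟨h1, h2⟩ | ⟨h1, h2⟩
        · rw [if_pos h1]
          exact Or.inl ⟨Prod.ext h1 rfl, Prod.ext h2 rfl⟩
        · by_cases hsu : G.src e = u
          · -- degenerate: e is a loop-ish case where both orientations match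
            rw [if_pos hsu]
            exact Or.inl ⟨Prod.ext hsu rfl,
              Prod.ext (show G.tgt e = w by rw [h2, ← hsu, h1]) rfl⟩
          · rw [if_neg hsu]
            exact Or.inr ⟨Prod.ext h1 rfl, Prod.ext h2 (tauStep_invol T e τ)⟩
      refine ⟨.cons _ hends q, ?_⟩
      intro F hF
      simp only [Walk.edges, List.mem_cons] at hF ⊢
      rcases hF with rfl | hF
      · split <;> exact Or.inl rfl
      · exact Or.inr (hq F hF)

lemma mem_endTau (T : Finset E) {s : E} (hs : s ∈ (Tᶜ : Finset E))
    {u v : V} (p : G.Walk u v) : ∀ (τ : {τ : Finset E // τ ⊆ Tᶜ}),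
      (s ∈ (endTau T p τ).1 ↔ ((s ∈ τ.1) ↔ p.edges.count s % 2 = 0)) := by
  induction p with
  | nil => intro τ; simp [endTau, Walk.edges]
  | cons e h p IH =>
      intro τ
      rw [endTau, IH (tauStep T e τ)]
      simp only [Walk.edges, List.count_cons]
      by_cases hse : e = s
      · subst hse
        have hmem : e ∈ (tauStep T e τ).1 ↔ ¬ e ∈ τ.1 := by
          rw [mem_tauStep, if_pos hs]
          simp only [or_false]
          tauto
        rcases Nat.mod_two_eq_zero_or_one (p.edges.count e) with h0 | h0 <;>
          simp [hmem, h0, Nat.add_mod] <;> tauto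
      · have hse' : s ≠ e := fun h => hse h.symm
        have hmem : s ∈ (tauStep T e τ).1 ↔ s ∈ τ.1 := by
          rw [mem_tauStep]
          split
          · simp only [hse', iff_true, or_false, false_or]
            tauto
          · rfl
        have hcnt : ¬ (e == s) = true := by simpa using hse
        rw [hmem, if_neg hcnt, Nat.add_zero]

end Multigraph
namespace Multigraph

variable {V E : Type} [Fintype V] [Fintype E] [DecidableEq V] [DecidableEq E]

lemma map_sum_eq (l : List E) (g : E → ZMod 2) :
    (l.map g).sum = ∑ s : E, (l.count s : ZMod 2) * g s := by
  induction l with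
  | nil => simp
  | cons a l IH =>
      simp only [List.map_cons, List.sum_cons, IH, List.count_cons]
      have key : ∀ s : E, (((l.count s + if (a == s) = true then 1 else 0 : ℕ)) : ZMod 2) * g s
          = (l.count s : ZMod 2) * g s + (if a = s then g s else 0) := by
        intro s
        by_cases h : a = s
        · simp only [h, beq_self_eq_true, if_true]
          push_cast
          ring
        · have : ¬ (a == s) = true := by simpa using h
          simp [this, h]
      rw [Finset.sum_congr rfl (fun s _ => key s), Finset.sum_add_distrib,
        Finset.sum_ite_eq Finset.univ a g]
      simp [add_comm]

variable {G : Multigraph V E} {T : Finset E}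

lemma loops_exist (hT : G.IsSpanningTree T) (b : V) (σ : Finset E) (hσ : σ ⊆ Tᶜ) :
    ∃ p : G.Walk b b, (∀ f ∈ p.edges, f ∈ T ∨ f ∈ σ) ∧
      ∀ s ∈ (Tᶜ : Finset E), p.edges.count s % 2 = if s ∈ σ then 1 else 0 := by
  classical
  induction σ using Finset.induction_on with
  | empty =>
      exact ⟨.nil b, by simp [Walk.edges], fun s _ => by simp [Walk.edges]⟩
  | @insert a σ ha IH =>
      have hσ' : σ ⊆ Tᶜ := fun x hx => hσ (Finset.mem_insert_of_mem hx)
      obtain ⟨p, hp1, hp2⟩ := IH hσ'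
      obtain ⟨q1, hq1⟩ := hT.1 b (G.src a)
      obtain ⟨q2, hq2⟩ := hT.1 (G.tgt a) b
      refine ⟨(q1.append (.cons a (Or.inl ⟨rfl, rfl⟩) q2)).append p, ?_, ?_⟩
      · intro f hf
        simp only [Walk.edges_append, Walk.edges, List.mem_append, List.mem_cons] at hf
        rcases hf with (hf | rfl | hf) | hf
        · exact Or.inl (hq1 f hf)
        · exact Or.inr (Finset.mem_insert_self _ _)
        · exact Or.inl (hq2 f hf)
        · rcases hp1 f hf with hf' | hf'
          · exact Or.inl hf'
          · exact Or.inr (Finset.mem_insert_of_mem hf')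
      · intro s hs
        have hsT : s ∉ T := by simpa using hs
        have hcq1 : q1.edges.count s = 0 := List.count_eq_zero.mpr (fun h => hsT (hq1 s h))
        have hcq2 : q2.edges.count s = 0 := List.count_eq_zero.mpr (fun h => hsT (hq2 s h))
        have hcp := hp2 s hs
        simp only [Walk.edges_append, Walk.edges, List.count_append, List.count_cons,
          hcq1, hcq2]
        by_cases hsa : s = a
        · subst hsa
          rw [if_neg ha] at hcp
          rw [if_pos (Finset.mem_insert_self _ _)]
          simp only [beq_self_eq_true, if_true]
          omega
        · have h1 : ¬ (a == s) = true := by simpa using fun h => hsa h.symm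
          simp only [Finset.mem_insert, hsa, false_or, if_neg h1]
          omega

lemma construct (hG : G.TwoConnected) (hT : G.IsSpanningTree T) (e : E) (a b : V)
    (σ : Finset E) (hσ : σ ⊆ Tᶜ)
    (hparT : e ∈ T → chi G T e a + chi G T e b + ∑ s ∈ σ, crossInd G T e s = 0)
    (hparS : e ∈ (Tᶜ : Finset E) → e ∉ σ) :
    ∃ p : G.Walk a b, e ∉ p.edges ∧
      ∀ s ∈ (Tᶜ : Finset E), p.edges.count s % 2 = if s ∈ σ then 1 else 0 := by
  obtain ⟨q, hq⟩ := hT.1 a b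
  obtain ⟨L, hL1, hL2⟩ := loops_exist hT b σ hσ
  set p₀ : G.Walk a b := q.append L with hp₀
  have hcnt0 : ∀ s ∈ (Tᶜ : Finset E), p₀.edges.count s % 2 = if s ∈ σ then 1 else 0 := by
    intro s hs
    have hsT : s ∉ T := by simpa using hs
    have hzero : q.edges.count s = 0 := List.count_eq_zero.mpr fun h => hsT (hq s h)
    simp only [hp₀, Walk.edges_append, List.count_append, hzero, Nat.zero_add]
    exact hL2 s hs
  by_cases he : e ∈ T
  · have hchi := chi_walk (G := G) (T := T) (e := e) p₀
    rw [map_sum_eq] at hchi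
    have h1 : ∑ s ∈ T, (p₀.edges.count s : ZMod 2) * crossInd G T e s
        = (p₀.edges.count e : ZMod 2) := by
      rw [Finset.sum_eq_single_of_mem e he]
      · rw [show crossInd G T e e = 1 from by
          unfold crossInd; rw [chi_src, chi_tgt hT he, zero_add], mul_one]
      · intro f hf hfe
        have hz : crossInd G T e f = 0 := by
          have := chi_step hT he hf
          rw [if_neg hfe] at this
          exact this
        rw [hz, mul_zero]
    have h2 : ∑ s ∈ Tᶜ, (p₀.edges.count s : ZMod 2) * crossInd G T e s
        = ∑ s ∈ σ, crossInd G T e s := by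
      have key : ∀ s ∈ (Tᶜ : Finset E), (p₀.edges.count s : ZMod 2) * crossInd G T e s
          = if s ∈ σ then crossInd G T e s else 0 := by
        intro s hs
        have hcast : (p₀.edges.count s : ZMod 2) = if s ∈ σ then 1 else 0 := by
          rw [← ZMod.natCast_mod (p₀.edges.count s) 2, hcnt0 s hs]
          split <;> simp
        rw [hcast]
        by_cases hsσ : s ∈ σ <;> simp [hsσ]
      rw [Finset.sum_congr rfl key, Finset.sum_ite_mem]
      congr 1
      exact Finset.inter_eq_right.mpr hσ
    rw [← Finset.sum_add_sum_compl T, h1, h2] at hchi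
    have hm0 : (p₀.edges.count e : ZMod 2) = 0 := by
      have hpar := hparT he
      have helper : ∀ x y m s : ZMod 2, y = x + (m + s) → x + y + s = 0 → m = 0 := by decide
      exact helper _ _ _ _ hchi hpar
    have hdvd : 2 ∣ p₀.edges.count e := by
      exact_mod_cast (ZMod.natCast_eq_zero_iff _ 2).mp hm0
    obtain ⟨t, ht⟩ := hdvd
    obtain ⟨D, hD⟩ := hG.2 e (G.src e) (G.tgt e)
    have hDe : ∀ f ∈ D.edges, f ≠ e := fun f hf => by simpa using hD f hf
    refine ⟨Walk.replaceEdge e D p₀, ?_, ?_⟩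
    · intro hmem
      rcases Walk.mem_replaceEdge p₀ e hmem with ⟨_, h2'⟩ | h1'
      · exact h2' rfl
      · exact hDe e h1' rfl
    · intro s hs
      have hse : s ≠ e := fun h => (by simpa using hs : s ∉ T) (h ▸ he)
      rw [Walk.count_replaceEdge hse p₀, ht, mul_assoc, Nat.add_mul_mod_self_left]
      exact hcnt0 s hs
  · have heC : e ∈ (Tᶜ : Finset E) := by simpa using he
    have heσ := hparS heC
    refine ⟨p₀, ?_, hcnt0⟩
    intro hmem
    simp only [hp₀, Walk.edges_append, List.mem_append] at hmem
    rcases hmem with h | h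
    · exact he (hq e h)
    · rcases hL1 e h with h' | h'
      · exact he h'
      · exact heσ h'

end Multigraph
namespace Multigraph

variable {V E : Type} [Fintype V] [Fintype E] [DecidableEq V] [DecidableEq E]
variable {G : Multigraph V E} {T : Finset E}

lemma reachAvoid_iff_phi (hG : G.TwoConnected) (hT : G.IsSpanningTree T) (e : E)
    (x y : V × {τ : Finset E // τ ⊆ Tᶜ}) :
    (cover G T).ReachAvoid (wallOf G T e) x y ↔ phi G T e x = phi G T e y := by
  constructor
  · exact phi_eq_of_reachAvoid hT e
  · intro hphi
    set σ : Finset E := symmDiff x.2.1 y.2.1 with hσdef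
    have hσ : σ ⊆ Tᶜ := by
      intro s hsm
      rcases Finset.mem_symmDiff.mp hsm with ⟨h, _⟩ | ⟨h, _⟩
      · exact x.2.2 h
      · exact y.2.2 h
    have hparT : e ∈ T → chi G T e x.1 + chi G T e y.1 + ∑ s ∈ σ, crossInd G T e s = 0 := by
      intro he
      have h1 := hphi
      simp only [phi, if_pos he] at h1
      rw [hσdef, sum_symmDiff_char2]
      have helper : ∀ xa xb sx sy : ZMod 2, xa + sx = xb + sy →
          xa + xb + (sx + sy) = 0 := by decide
      exact helper _ _ _ _ h1
    have hparS : e ∈ (Tᶜ : Finset E) → e ∉ σ := by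
      intro heC hmem
      have he : e ∉ T := by simpa using heC
      simp only [phi, if_neg he] at hphi
      rcases Finset.mem_symmDiff.mp hmem with ⟨h1, h2⟩ | ⟨h1, h2⟩ <;>
        simp [h1, h2] at hphi
    obtain ⟨p, hpe, hpc⟩ := construct hG hT e x.1 y.1 σ hσ hparT hparS
    obtain ⟨qq, hqq⟩ := lift_exists T p x.2
    have hend : endTau T p x.2 = y.2 := by
      apply Subtype.ext
      apply Finset.ext
      intro s
      by_cases hs : s ∈ (Tᶜ : Finset E)
      · rw [mem_endTau T hs p x.2]
        have hcnt := hpc s hs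
        by_cases hsσ : s ∈ σ
        · rw [if_pos hsσ] at hcnt
          rw [hσdef, Finset.mem_symmDiff] at hsσ
          rw [hcnt]
          have hne : ¬ ((1 : ℕ) = 0) := by norm_num
          tauto
        · rw [if_neg hsσ] at hcnt
          rw [hσdef, Finset.mem_symmDiff] at hsσ
          rw [hcnt]
          have he0 : (0 : ℕ) = 0 := rfl
          tauto
      · have h1 : s ∉ (endTau T p x.2).1 := fun h => hs ((endTau T p x.2).2 h)
        have h2 : s ∉ y.2.1 := fun h => hs (y.2.2 h)
        simp [h1, h2]
    refine ⟨qq.copy rfl (by rw [hend]), ?_⟩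
    intro F hF hFw
    have hmem : F.1 ∈ p.edges := hqq F (by simpa using hF)
    have hF1 : F.1 = e := hFw
    rw [hF1] at hmem
    exact hpe hmem

end Multigraph

open Multigraph in
/-- For a `ℤ/2`-pair `(G̃, G)`, each `w_e = π⁻¹(e)` is a wall of `G̃ = cover G T`,
and `W = { w_e : e ∈ E(G) }` is a wall structure on `G̃`. -/
theorem walls_of_Z2_cover {V E : Type} [Fintype V] [Fintype E]
    [DecidableEq V] [DecidableEq E] (G : Multigraph V E)
    (hG : G.TwoConnected) (T : Finset E) (hT : G.IsSpanningTree T) :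
    (∀ e : E, (cover G T).IsWall (wallOf G T e)) ∧
    (cover G T).IsWallStructure {w | ∃ e : E, w = wallOf G T e} := by
  have hwall : ∀ e : E, (cover G T).IsWall (wallOf G T e) := by
    intro e
    refine ⟨{z | phi G T e z = 0}, {z | phi G T e z = 1}, ?_, ?_, ?_, ?_, ?_⟩
    · -- A nonempty
      set F₀ : E × {τ : Finset E // τ ⊆ Tᶜ} := (e, ⟨∅, by simp⟩) with hF₀
      have hstep := phi_step hT e F₀
      rw [if_pos (show F₀.1 = e from rfl)] at hstep
      rcases (show ∀ z : ZMod 2, z = 0 ∨ z = 1 from by decide)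
          (phi G T e ((cover G T).src F₀)) with h | h
      · exact ⟨_, h⟩
      · refine ⟨(cover G T).tgt F₀, ?_⟩
        show phi G T e _ = 0
        rw [hstep, h]
        decide
    · -- B nonempty
      set F₀ : E × {τ : Finset E // τ ⊆ Tᶜ} := (e, ⟨∅, by simp⟩) with hF₀
      have hstep := phi_step hT e F₀
      rw [if_pos (show F₀.1 = e from rfl)] at hstep
      rcases (show ∀ z : ZMod 2, z = 0 ∨ z = 1 from by decide)
          (phi G T e ((cover G T).src F₀)) with h | h
      · refine ⟨(cover G T).tgt F₀, ?_⟩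
        show phi G T e _ = 1
        rw [hstep, h]
        decide
      · exact ⟨_, h⟩
    · -- disjoint
      rw [Set.disjoint_left]
      intro z h0 h1
      exact absurd ((h0 : phi G T e z = 0).symm.trans (h1 : phi G T e z = 1)) (by decide)
    · -- union
      apply Set.eq_univ_iff_forall.mpr
      intro z
      rcases (show ∀ w : ZMod 2, w = 0 ∨ w = 1 from by decide) (phi G T e z) with h | h
      · exact Or.inl h
      · exact Or.inr h
    · -- the characterization
      intro u v
      rw [reachAvoid_iff_phi hG hT e u v]
      constructor
      · intro h
        rcases (show ∀ w : ZMod 2, w = 0 ∨ w = 1 from by decide) (phi G T e u) with h0 | h0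
        · exact Or.inl ⟨h0, h.symm.trans h0⟩
        · exact Or.inr ⟨h0, h.symm.trans h0⟩
      · rintro (⟨h1, h2⟩ | ⟨h1, h2⟩) <;>
          exact (h1 : phi G T e u = _).trans (h2 : phi G T e v = _).symm
  refine ⟨hwall, ?_, ?_⟩
  · rintro w ⟨e, rfl⟩
    exact hwall e
  · intro F
    refine ⟨wallOf G T F.1, ⟨⟨F.1, rfl⟩, rfl⟩, ?_⟩
    rintro w ⟨⟨e', rfl⟩, hmem⟩
    have : F.1 = e' := hmem
    rw [← this]
end

section
/- Let (G̃, G) be a ℤ/2-pair with wall structure W = { π^{−1}(e) : e ∈ E(G) } on G̃. Then for all vertices x, y of G̃: d_W(x,y) < girth(G) if and only if d_{G̃}(x,y) < girth(G); and moreover, if these inequalities hold then d_W(x,y) = d_{G̃}(x,y). -/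
namespace MGAux
open Multigraph

variable {V E : Type} {G : Multigraph V E}

theorem endsAt_symm {e : E} {u v : V} (h : G.EndsAt e u v) : G.EndsAt e v u :=
  h.elim Or.inr Or.inl

theorem endsAt_inl {e : E} {u v : V} (h1 : G.src e = u) (h2 : G.tgt e = v) : G.EndsAt e u v :=
  Or.inl ⟨h1, h2⟩

namespace WalkAux

open Multigraph.Walk

def append : ∀ {u v w : V}, G.Walk u v → G.Walk v w → G.Walk u w
  | _, _, _, .nil _, q => q
  | _, _, _, .cons e h p, q => .cons e h (append p q)

@[simp] theorem length_nil (v : V) : (Walk.nil (G := G) v).length = 0 := rfl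
@[simp] theorem length_cons {u v w : V} (e : E) (h : G.EndsAt e u v) (p : G.Walk v w) :
    (Walk.cons e h p).length = p.length + 1 := rfl
@[simp] theorem edges_nil (v : V) : (Walk.nil (G := G) v).edges = [] := rfl
@[simp] theorem edges_cons {u v w : V} (e : E) (h : G.EndsAt e u v) (p : G.Walk v w) :
    (Walk.cons e h p).edges = e :: p.edges := rfl
@[simp] theorem verts_nil (v : V) : (Walk.nil (G := G) v).verts = [v] := rfl
@[simp] theorem verts_cons {u v w : V} (e : E) (h : G.EndsAt e u v) (p : G.Walk v w) :
    (Walk.cons e h p).verts = u :: p.verts := rfl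

@[simp] theorem edges_append : ∀ {u v w : V} (p : G.Walk u v) (q : G.Walk v w),
    (append p q).edges = p.edges ++ q.edges
  | _, _, _, .nil _, q => rfl
  | _, _, _, .cons e h p, q => by simp [append, edges_append p q]

@[simp] theorem length_edges : ∀ {u v : V} (p : G.Walk u v), p.edges.length = p.length
  | _, _, .nil _ => rfl
  | _, _, .cons e h p => by simp [length_edges p]

theorem eq_of_length_zero : ∀ {u v : V} (p : G.Walk u v), p.length = 0 → u = v
  | _, _, .nil _, _ => rfl
  | _, _, .cons e h p, hl => by simp at hl

def reverse : ∀ {u v : V}, G.Walk u v → G.Walk v u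
  | _, _, .nil v => .nil v
  | _, _, .cons e h p => append (reverse p) (.cons e (endsAt_symm h) (.nil _))

theorem mem_edges_reverse : ∀ {u v : V} (p : G.Walk u v) (f : E),
    f ∈ (reverse p).edges ↔ f ∈ p.edges
  | _, _, .nil _, f => Iff.rfl
  | _, _, .cons e h p, f => by
      simp [reverse, mem_edges_reverse p f, or_comm]

theorem start_mem_verts : ∀ {u v : V} (p : G.Walk u v), u ∈ p.verts
  | _, _, .nil _ => List.mem_singleton.mpr rfl
  | _, _, .cons e h p => List.mem_cons_self

theorem mem_verts_of_mem_edges : ∀ {u v : V} (p : G.Walk u v) (f : E),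
    f ∈ p.edges → G.src f ∈ p.verts ∧ G.tgt f ∈ p.verts
  | _, _, .cons e h p, f, hf => by
      rcases List.mem_cons.mp hf with rfl | hf
      · rcases id h with ⟨h1, h2⟩ | ⟨h1, h2⟩ <;>
          simp [h1, h2, start_mem_verts p, List.mem_cons]
      · have := mem_verts_of_mem_edges p f hf
        exact ⟨List.mem_cons_of_mem _ this.1, List.mem_cons_of_mem _ this.2⟩

theorem edges_nodup_of_verts_nodup : ∀ {u v : V} (p : G.Walk u v),
    p.verts.Nodup → p.edges.Nodup
  | _, _, .nil _, _ => List.nodup_nil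
  | u, _, .cons e h p, hn => by
      simp only [verts_cons, List.nodup_cons] at hn
      simp only [edges_cons, List.nodup_cons]
      refine ⟨fun he => hn.1 ?_, edges_nodup_of_verts_nodup p hn.2⟩
      have := mem_verts_of_mem_edges p e he
      rcases h with ⟨h1, _⟩ | ⟨_, h2⟩
      · exact h1 ▸ this.1
      · exact h2 ▸ this.2

theorem verts_concat : ∀ {u v : V} (p : G.Walk u v), ∃ l, p.verts = l ++ [v]
  | _, _, .nil v => ⟨[], rfl⟩
  | u, _, .cons e h p => by
      obtain ⟨l, hl⟩ := verts_concat p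
      exact ⟨u :: l, by simp [hl]⟩

theorem extract [DecidableEq V] : ∀ {a b : V} (q : G.Walk a b) {u : V}, u ∈ q.verts →
    ∃ r : G.Walk u b, r.verts.IsSuffix q.verts ∧ ∀ f ∈ r.edges, f ∈ q.edges
  | _, _, .nil v, u, hu => by
      have : u = v := by simpa using hu
      subst this
      exact ⟨.nil u, List.suffix_refl _, by simp⟩
  | a, b, .cons e h q, u, hu => by
      by_cases hua : u = a
      · subst hua
        exact ⟨.cons e h q, List.suffix_refl _, fun f hf => hf⟩
      · have hu' : u ∈ q.verts := by
          rcases List.mem_cons.mp hu with h1 | h1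
          · exact absurd h1 hua
          · exact h1
        obtain ⟨r, hr1, hr2⟩ := extract q hu'
        exact ⟨r, hr1.trans (List.suffix_cons _ _),
          fun f hf => List.mem_cons_of_mem _ (hr2 f hf)⟩

theorem loopErase [DecidableEq V] : ∀ {u v : V} (p : G.Walk u v),
    ∃ q : G.Walk u v, q.verts.Nodup ∧ ∀ f ∈ q.edges, f ∈ p.edges
  | _, _, .nil v => ⟨.nil v, by simp, by simp⟩
  | u, v, .cons e h p => by
      obtain ⟨q, hq1, hq2⟩ := loopErase p
      by_cases hu : u ∈ q.verts
      · obtain ⟨r, hr1, hr2⟩ := extract q hu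
        exact ⟨r, hr1.sublist.nodup hq1,
          fun f hf => List.mem_cons_of_mem _ (hq2 f (hr2 f hf))⟩
      · exact ⟨.cons e h q, by simp [hq1, hu],
          fun f hf => by
            rcases List.mem_cons.mp hf with rfl | hf
            · exact List.mem_cons_self
            · exact List.mem_cons_of_mem _ (hq2 f hf)⟩

end WalkAux
end MGAux
namespace MGAux
open Multigraph
section Parity
variable {V E : Type} [DecidableEq V] [DecidableEq E] (G : Multigraph V E)

/-- degree mod 2 of a vertex in an edge finset -/
noncomputable def degp (z : Finset E) (w : V) : ZMod 2 :=
  ∑ e ∈ z, ((if G.src e = w then 1 else 0) + (if G.tgt e = w then 1 else 0))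

variable {G}

theorem degp_symmDiff (z z' : Finset E) (w : V) :
    degp G (symmDiff z z') w = degp G z w + degp G z' w := by
  classical
  have h1 : degp G (symmDiff z z') w + degp G (z ∩ z') w = degp G (z ∪ z') w := by
    rw [degp, degp, degp, ← Finset.sum_union]
    · congr 1
      ext e
      simp [Finset.mem_symmDiff, Finset.mem_inter, Finset.mem_union]
      tauto
    · simp [Finset.disjoint_left, Finset.mem_symmDiff]
      tauto
  have h2 : degp G (z ∪ z') w + degp G (z ∩ z') w = degp G z w + degp G z' w := by
    rw [degp, degp, degp, degp, Finset.sum_union_inter]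
  have hc : degp G (z ∩ z') w + degp G (z ∩ z') w = 0 := by
    exact CharTwo.add_self_eq_zero _
  calc degp G (symmDiff z z') w = degp G (symmDiff z z') w + (degp G (z ∩ z') w + degp G (z ∩ z') w) := by rw [hc, add_zero]
    _ = (degp G (symmDiff z z') w + degp G (z ∩ z') w) + degp G (z ∩ z') w := by ring
    _ = degp G (z ∪ z') w + degp G (z ∩ z') w := by rw [h1]
    _ = degp G z w + degp G z' w := h2

@[simp] theorem degp_empty (w : V) : degp G (∅ : Finset E) w = 0 := by simp [degp]

@[simp] theorem degp_singleton (e : E) (w : V) :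
    degp G ({e} : Finset E) w = (if G.src e = w then 1 else 0) + (if G.tgt e = w then 1 else 0) := by
  simp [degp]

theorem degp_erase {z : Finset E} {e : E} (he : e ∈ z) (w : V) :
    degp G z w = ((if G.src e = w then 1 else 0) + (if G.tgt e = w then 1 else 0))
      + degp G (z.erase e) w := by
  rw [degp, degp, ← Finset.add_sum_erase _ _ he]

/-- the set of edges used an odd number of times by a walk -/
noncomputable def edgeParity [Fintype E] {u v : V} (p : G.Walk u v) : Finset E :=
  Finset.univ.filter (fun e => p.edges.count e % 2 = 1)

theorem mem_edgeParity [Fintype E] {u v : V} (p : G.Walk u v) (e : E) :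
    e ∈ edgeParity p ↔ p.edges.count e % 2 = 1 := by simp [edgeParity]

theorem edgeParity_nil [Fintype E] (v : V) : edgeParity (Walk.nil (G := G) v) = ∅ := by
  ext e; simp [mem_edgeParity, Walk.edges]

theorem edgeParity_cons [Fintype E] {u v w : V} (e : E) (h : G.EndsAt e u v) (p : G.Walk v w) :
    edgeParity (Walk.cons e h p) = symmDiff (edgeParity p) {e} := by
  ext f
  by_cases hf : f = e
  · subst hf
    simp only [mem_edgeParity, WalkAux.edges_cons, List.count_cons_self, Finset.mem_symmDiff,
      Finset.mem_singleton, not_true, and_false, false_or, true_and, and_true]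
    omega
  · simp only [mem_edgeParity, WalkAux.edges_cons, List.count_cons_of_ne (Ne.symm hf), Finset.mem_symmDiff,
      Finset.mem_singleton, hf, not_false_iff, and_true, false_and, or_false]

theorem degp_edgeParity [Fintype E] : ∀ {u b : V} (p : G.Walk u b) (w : V),
    degp G (edgeParity p) w = (if u = w then 1 else 0) + (if b = w then 1 else 0)
  | _, _, .nil v, w => by
      rw [edgeParity_nil]
      simp [CharTwo.add_self_eq_zero]
  | u, b, .cons (v := m) e h p, w => by
      rw [edgeParity_cons, degp_symmDiff, degp_edgeParity p w, degp_singleton]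
      have h1 : (if G.src e = w then (1:ZMod 2) else 0) + (if G.tgt e = w then 1 else 0)
          = (if u = w then 1 else 0) + (if m = w then 1 else 0) := by
        rcases h with ⟨h1, h2⟩ | ⟨h1, h2⟩ <;> rw [h1, h2]
        ring
      rw [h1]
      have hself : (if m = w then (1:ZMod 2) else 0) + (if m = w then 1 else 0) = 0 :=
        CharTwo.add_self_eq_zero _
      calc (if m = w then (1:ZMod 2) else 0) + (if b = w then 1 else 0)
            + ((if u = w then 1 else 0) + (if m = w then 1 else 0))
          = ((if m = w then (1:ZMod 2) else 0) + (if m = w then 1 else 0))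
            + ((if u = w then 1 else 0) + (if b = w then 1 else 0)) := by ring
        _ = (if u = w then (1:ZMod 2) else 0) + (if b = w then 1 else 0) := by
            rw [hself, zero_add]

end Parity
end MGAux
namespace MGAux
open Multigraph
section Trail
variable {V E : Type} [DecidableEq V] [DecidableEq E] {G : Multigraph V E}

theorem exists_incident {z : Finset E} {u : V} (h : degp G z u ≠ 0) :
    ∃ e ∈ z, ((if G.src e = u then (1:ZMod 2) else 0) + (if G.tgt e = u then 1 else 0)) ≠ 0 := by
  by_contra hc
  push_neg at hc
  exact h (Finset.sum_eq_zero hc)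

theorem term_ne_zero {e : E} {u : V}
    (h : ((if G.src e = u then (1:ZMod 2) else 0) + (if G.tgt e = u then 1 else 0)) ≠ 0) :
    (G.src e = u ∧ G.tgt e ≠ u) ∨ (G.tgt e = u ∧ G.src e ≠ u) := by
  by_cases h1 : G.src e = u <;> by_cases h2 : G.tgt e = u
  · rw [if_pos h1, if_pos h2] at h
    exact absurd (by decide : (1:ZMod 2) + 1 = 0) h
  · exact Or.inl ⟨h1, h2⟩
  · exact Or.inr ⟨h2, h1⟩
  · rw [if_neg h1, if_neg h2] at h
    exact absurd (by decide : (0:ZMod 2) + 0 = 0) h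

theorem trailStep {z : Finset E} {u : V} (h : degp G z u ≠ 0) :
    ∃ e ∈ z, ∃ u', u' ≠ u ∧ G.EndsAt e u u' ∧
      ∀ w, degp G (z.erase e) w = degp G z w +
        ((if u = w then (1:ZMod 2) else 0) + (if u' = w then 1 else 0)) := by
  obtain ⟨e, hez, hterm⟩ := exists_incident h
  have herase : ∀ w, degp G (z.erase e) w = degp G z w +
      ((if G.src e = w then (1:ZMod 2) else 0) + (if G.tgt e = w then 1 else 0)) := by
    intro w
    have h0 := degp_erase (G := G) hez w
    have z2 : ∀ t d : ZMod 2, d = (t + d) + t := by decide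
    rw [h0]
    exact z2 _ _
  rcases term_ne_zero hterm with ⟨h1, h2⟩ | ⟨h1, h2⟩
  · refine ⟨e, hez, G.tgt e, h2, Or.inl ⟨h1, rfl⟩, fun w => ?_⟩
    rw [herase w, h1]
  · refine ⟨e, hez, G.src e, h2, Or.inr ⟨rfl, h1⟩, fun w => ?_⟩
    rw [herase w, h1]
    ring

theorem existsTrail (z : Finset E) : ∀ u v : V, u ≠ v →
    (∀ w, degp G z w = (if u = w then 1 else 0) + (if v = w then 1 else 0)) →
    ∃ p : G.Walk u v, p.edges.Nodup ∧ (∀ f ∈ p.edges, f ∈ z) ∧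
      (∀ w, degp G (z \ p.edges.toFinset) w = 0) := by
  induction z using Finset.strongInduction with
  | _ z IH =>
    intro u v huv hdeg
    have hdu : degp G z u ≠ 0 := by
      rw [hdeg u, if_pos rfl, if_neg (fun h => huv h.symm), add_zero]
      decide
    obtain ⟨e, hez, u', huu', hends, herase⟩ := trailStep hdu
    have hss : z.erase e ⊂ z := Finset.erase_ssubset hez
    have hdeg' : ∀ w, degp G (z.erase e) w
        = (if u' = w then 1 else 0) + (if v = w then 1 else 0) := by
      intro w
      rw [herase w, hdeg w]
      have z2 : ∀ a b c : ZMod 2, (a + b) + (a + c) = c + b := by decide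
      exact z2 _ _ _
    rcases eq_or_ne u' v with rfl | huv'
    · -- single edge walk
      refine ⟨Walk.cons e hends (Walk.nil u'), by simp, by simpa using hez, fun w => ?_⟩
      have hzz : z \ (Walk.cons e hends (Walk.nil u')).edges.toFinset = z.erase e := by
        simp [Finset.erase_eq]
      rw [hzz, hdeg' w]
      have z2 : ∀ a : ZMod 2, a + a = 0 := by decide
      exact z2 _
    · obtain ⟨p', hnd', hmem', heven'⟩ := IH (z.erase e) hss u' v huv' hdeg'
      have henp : e ∉ p'.edges := fun hc => (Finset.mem_erase.mp (hmem' e hc)).1 rfl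
      refine ⟨Walk.cons e hends p', by simp [hnd', henp], ?_, fun w => ?_⟩
      · intro f hf
        rcases List.mem_cons.mp hf with rfl | hf
        · exact hez
        · exact Finset.mem_of_mem_erase (hmem' f hf)
      · have hzz : z \ (Walk.cons e hends p').edges.toFinset
            = (z.erase e) \ p'.edges.toFinset := by
          ext f
          simp only [WalkAux.edges_cons, List.toFinset_cons, Finset.mem_sdiff,
            Finset.mem_insert, Finset.mem_erase, List.mem_toFinset]
          tauto
        rw [hzz]
        exact heven' w

end Trail
end MGAux
namespace MGAux
open Multigraph
section Loops
variable {V E : Type} [DecidableEq V] [DecidableEq E] {G : Multigraph V E}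

theorem evenLoop {z : Finset E} (hne : z.Nonempty) (heven : ∀ w, degp G z w = 0) :
    ∃ (v : V) (ℓ : G.Walk v v), G.IsSimpleLoop ℓ ∧ (∀ f ∈ ℓ.edges, f ∈ z) ∧
      ℓ.length ≤ z.card := by
  obtain ⟨e, hez⟩ := hne
  have hcard1 : 1 ≤ z.card := Finset.card_pos.mpr ⟨e, hez⟩
  rcases eq_or_ne (G.src e) (G.tgt e) with hab | hab
  · -- a self-loop
    refine ⟨G.src e, Walk.cons e (endsAt_inl rfl hab.symm) (Walk.nil _), ?_, ?_, ?_⟩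
    · refine ⟨by simp, by simp, by simp [Walk.verts]⟩
    · intro f hf
      simp only [WalkAux.edges_cons, WalkAux.edges_nil] at hf
      rcases List.mem_cons.mp hf with rfl | hf
      · exact hez
      · simp at hf
    · simpa using hcard1
  · -- erase e, find trail between endpoints, close up
    have hdeg' : ∀ w, degp G (z.erase e) w
        = (if G.tgt e = w then 1 else 0) + (if G.src e = w then 1 else 0) := by
      intro w
      have h0 := degp_erase (G := G) hez w
      have h1 := heven w
      rw [h0] at h1
      have z2 : ∀ t d : ZMod 2, t + d = 0 → d = t := by decide
      rw [z2 _ _ h1]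
      ring
    obtain ⟨p, hnd, hsub, _⟩ := existsTrail (z.erase e) (G.tgt e) (G.src e) hab.symm hdeg'
    obtain ⟨q, hqv, hqe⟩ := WalkAux.loopErase p
    have hqz : ∀ f ∈ q.edges, f ∈ z.erase e := fun f hf => hsub f (hqe f hf)
    have hqnd : q.edges.Nodup := WalkAux.edges_nodup_of_verts_nodup q hqv
    have henq : e ∉ q.edges := fun hc => (Finset.mem_erase.mp (hqz e hc)).1 rfl
    refine ⟨G.src e, Walk.cons e (endsAt_inl rfl rfl) q, ⟨by simp, by simp [hqnd, henq], ?_⟩,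
      ?_, ?_⟩
    · -- verts.dropLast nodup
      obtain ⟨l, hl⟩ := WalkAux.verts_concat q
      have hql : q.verts.Nodup := hqv
      rw [hl] at hql
      have hla : G.src e ∉ l ∧ l.Nodup := by
        constructor
        · intro hc
          have := (List.nodup_append'.mp hql).2.2
          exact this hc (List.mem_singleton.mpr rfl)
        · exact (List.nodup_append'.mp hql).1
      have : (Walk.cons e (endsAt_inl rfl rfl : G.EndsAt e (G.src e) (G.tgt e)) q).verts.dropLast
          = G.src e :: l := by
        rw [WalkAux.verts_cons, hl, ← List.cons_append, List.dropLast_concat]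
      rw [this]
      exact List.nodup_cons.mpr ⟨hla.1, hla.2⟩
    · intro f hf
      rcases List.mem_cons.mp hf with rfl | hf
      · exact hez
      · exact Finset.mem_of_mem_erase (hqz f hf)
    · have h1 : q.length = q.edges.length := (WalkAux.length_edges q).symm
      have h2 : q.edges.length = q.edges.toFinset.card := (List.toFinset_card_of_nodup hqnd).symm
      have h3 : q.edges.toFinset ⊆ z.erase e := fun f hf => hqz f (List.mem_toFinset.mp hf)
      have h4 : q.edges.toFinset.card ≤ (z.erase e).card := Finset.card_le_card h3
      have h5 : (z.erase e).card = z.card - 1 := Finset.card_erase_of_mem hez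
      simp only [WalkAux.length_cons]
      omega

theorem girth_le_of_even {z : Finset E} (hne : z.Nonempty) (heven : ∀ w, degp G z w = 0) :
    G.girth ≤ z.card := by
  obtain ⟨v, ℓ, hsl, _, hlen⟩ := evenLoop hne heven
  exact le_trans (Nat.sInf_le ⟨v, ℓ, hsl, rfl⟩) hlen

end Loops
end MGAux
namespace MGAux
open Multigraph
section Spanning
variable {V E : Type} [DecidableEq V] [DecidableEq E] {G : Multigraph V E}

/-- distance to `r` within edge set `T'` -/
noncomputable def distTo (G : Multigraph V E) (T' : Finset E) (r v : V) : ℕ :=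
  sInf {n | ∃ p : G.Walk v r, (∀ f ∈ p.edges, f ∈ T') ∧ p.length = n}

theorem walk_eq_of_isEmpty [IsEmpty E] : ∀ {u v : V}, G.Walk u v → u = v
  | _, _, .nil _ => rfl
  | _, _, .cons e _ _ => isEmptyElim e

theorem spanning_card [Fintype V] (T' : Finset E)
    (hconn : ∀ u v : V, ∃ p : G.Walk u v, ∀ f ∈ p.edges, f ∈ T') :
    Fintype.card V ≤ T'.card + 1 := by
  rcases isEmpty_or_nonempty V with hV | hV
  · simp [Fintype.card_eq_zero]
  rcases isEmpty_or_nonempty E with hE | hE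
  · have : ∀ a b : V, a = b := fun a b => walk_eq_of_isEmpty (hconn a b).choose
    have h1 : Fintype.card V ≤ 1 := Fintype.card_le_one_iff.mpr this
    omega
  obtain ⟨r⟩ := hV
  have hne : ∀ v : V, {n | ∃ p : G.Walk v r, (∀ f ∈ p.edges, f ∈ T') ∧ p.length = n}.Nonempty := by
    intro v
    obtain ⟨p, hp⟩ := hconn v r
    exact ⟨p.length, p, hp, rfl⟩
  have key : ∀ v : V, v ≠ r → ∃ e : E, e ∈ T' ∧
      ∃ u' : V, G.EndsAt e v u' ∧ distTo G T' r u' < distTo G T' r v := by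
    intro v hv
    have hmem := Nat.sInf_mem (hne v)
    obtain ⟨p, hpT, hplen⟩ := hmem
    cases p with
    | nil => exact absurd rfl hv
    | cons e h q =>
      refine ⟨e, hpT e (List.mem_cons_self), _, h, ?_⟩
      have h1 : distTo G T' r _ ≤ q.length :=
        Nat.sInf_le ⟨q, fun f hf => hpT f (List.mem_cons_of_mem _ hf), rfl⟩
      have h2 : q.length + 1 = distTo G T' r v := hplen
      omega
  classical
  set f : V → E := fun v => if hv : v = r then Classical.arbitrary E else (key v hv).choose
    with hfdef
  have hf : ∀ v, v ≠ r → f v ∈ T' ∧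
      ∃ u' : V, G.EndsAt (f v) v u' ∧ distTo G T' r u' < distTo G T' r v := by
    intro v hv
    simp only [hfdef, dif_neg hv]
    exact ⟨(key v hv).choose_spec.1, (key v hv).choose_spec.2⟩
  have hinj : Set.InjOn f (Finset.univ.erase r) := by
    intro v₁ hv₁ v₂ hv₂ heq
    have hv₁r : v₁ ≠ r := (Finset.mem_erase.mp (by exact_mod_cast hv₁)).1
    have hv₂r : v₂ ≠ r := (Finset.mem_erase.mp (by exact_mod_cast hv₂)).1
    obtain ⟨_, u₁, h1, hd1⟩ := hf v₁ hv₁r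
    obtain ⟨_, u₂, h2, hd2⟩ := hf v₂ hv₂r
    rw [heq] at h1
    by_contra hne12
    -- v₂ ∈ {src, tgt} = {v₁, u₁} so v₂ = u₁; similarly v₁ = u₂
    have hx : v₂ = u₁ ∧ v₁ = u₂ := by
      rcases h1 with ⟨a1, b1⟩ | ⟨a1, b1⟩ <;> rcases h2 with ⟨a2, b2⟩ | ⟨a2, b2⟩
      · exact absurd (a1.symm.trans a2) hne12
      · exact ⟨b2.symm.trans b1, a1.symm.trans a2⟩
      · exact ⟨a2.symm.trans a1, b1.symm.trans b2⟩
      · exact absurd (b1.symm.trans b2) hne12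
    rw [hx.1] at hd2
    rw [hx.2] at hd1
    omega
  have hmapsto : ∀ v ∈ Finset.univ.erase r, f v ∈ T' := by
    intro v hv
    exact (hf v (Finset.mem_erase.mp hv).1).1
  have hcard := Finset.card_le_card_of_injOn f hmapsto hinj
  have h2 : (Finset.univ.erase r).card = Fintype.card V - 1 := by
    rw [Finset.card_erase_of_mem (Finset.mem_univ r), Finset.card_univ]
  have h3 : 1 ≤ Fintype.card V := @Fintype.card_pos _ _ ⟨r⟩
  omega

/-- substitute detours for a forbidden edge -/
theorem subst_walk {T : Finset E} {e : E}
    (hdet : ∀ u₁ v₁, G.EndsAt e u₁ v₁ → ∃ d : G.Walk u₁ v₁, ∀ f ∈ d.edges, f ∈ T.erase e) :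
    ∀ {a b : V} (p : G.Walk a b), (∀ f ∈ p.edges, f ∈ T) →
      ∃ q : G.Walk a b, ∀ f ∈ q.edges, f ∈ T.erase e
  | _, _, .nil v, _ => ⟨.nil v, by simp⟩
  | a, b, .cons g h p, hp => by
      obtain ⟨q', hq'⟩ := subst_walk hdet p (fun f hf => hp f (List.mem_cons_of_mem _ hf))
      by_cases hge : g = e
      · subst hge
        obtain ⟨d, hd⟩ := hdet _ _ h
        refine ⟨WalkAux.append d q', ?_⟩
        intro f hf
        rw [WalkAux.edges_append] at hf
        rcases List.mem_append.mp hf with hf | hf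
        · exact hd f hf
        · exact hq' f hf
      · refine ⟨.cons g h q', ?_⟩
        intro f hf
        rcases List.mem_cons.mp hf with rfl | hf
        · exact Finset.mem_erase.mpr ⟨hge, hp f (List.mem_cons_self)⟩
        · exact hq' f hf

/-- no nonempty even subgraph inside a spanning tree -/
theorem tree_even_empty [Fintype V] {T : Finset E}
    (hT1 : ∀ u v : V, ∃ p : G.Walk u v, ∀ f ∈ p.edges, f ∈ T)
    (hT2 : T.card + 1 = Fintype.card V)
    {z : Finset E} (hzT : z ⊆ T) (heven : ∀ w, degp G z w = 0) : z = ∅ := by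
  by_contra hne
  obtain ⟨v, ℓ, hsl, hsub, _⟩ := evenLoop (G := G) (Finset.nonempty_iff_ne_empty.mpr hne) heven
  cases ℓ with
  | nil => exact absurd hsl.1 (by simp)
  | @cons _ m _ e he q =>
    have hez : e ∈ z := hsub e (List.mem_cons_self)
    have hqz : ∀ f ∈ q.edges, f ∈ z := fun f hf => hsub f (List.mem_cons_of_mem _ hf)
    have henq : e ∉ q.edges := by
      have := hsl.2.1
      simp only [WalkAux.edges_cons, List.nodup_cons] at this
      exact this.1
    have hqe : ∀ f ∈ q.edges, f ∈ T.erase e := fun f hf =>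
      Finset.mem_erase.mpr ⟨fun hc => henq (hc ▸ hf), hzT (hqz f hf)⟩
    have hdet : ∀ u₁ v₁, G.EndsAt e u₁ v₁ →
        ∃ d : G.Walk u₁ v₁, ∀ f ∈ d.edges, f ∈ T.erase e := by
      intro u₁ v₁ h1
      rcases he with ⟨a1, b1⟩ | ⟨a1, b1⟩ <;> rcases h1 with ⟨a2, b2⟩ | ⟨a2, b2⟩
      · have h3 : u₁ = v := a2.symm.trans a1
        have h4 : v₁ = m := b2.symm.trans b1
        subst h3; subst h4
        exact ⟨WalkAux.reverse q, fun f hf => hqe f ((WalkAux.mem_edges_reverse q f).mp hf)⟩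
      · have h3 : v₁ = v := a2.symm.trans a1
        have h4 : u₁ = m := b2.symm.trans b1
        subst h3; subst h4
        exact ⟨q, hqe⟩
      · have h3 : u₁ = m := a2.symm.trans a1
        have h4 : v₁ = v := b2.symm.trans b1
        subst h3; subst h4
        exact ⟨q, hqe⟩
      · have h3 : v₁ = m := a2.symm.trans a1
        have h4 : u₁ = v := b2.symm.trans b1
        subst h3; subst h4
        exact ⟨WalkAux.reverse q, fun f hf => hqe f ((WalkAux.mem_edges_reverse q f).mp hf)⟩
    have hspan : ∀ u w : V, ∃ p : G.Walk u w, ∀ f ∈ p.edges, f ∈ T.erase e := by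
      intro u w
      obtain ⟨p, hp⟩ := hT1 u w
      exact subst_walk hdet p hp
    have hcard := spanning_card (T.erase e) hspan
    have hTe : e ∈ T := hzT hez
    have := Finset.card_erase_of_mem hTe
    have h1 : 1 ≤ T.card := Finset.card_pos.mpr ⟨e, hTe⟩
    omega

end Spanning
end MGAux
namespace MGAux
open Multigraph
section Cover
variable {V E : Type} [Fintype E] [DecidableEq V] [DecidableEq E]
  {G : Multigraph V E} {T : Finset E}

theorem tauStep_mem_T {e : E} (he : e ∈ T) (τ : {τ : Finset E // τ ⊆ Tᶜ}) :
    tauStep T e τ = τ := by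
  rw [tauStep, dif_neg]
  simp [he]

theorem tauStep_val (e : E) (τ : {τ : Finset E // τ ⊆ Tᶜ}) :
    (tauStep T e τ).1 = symmDiff τ.1 (Tᶜ ∩ {e}) := by
  by_cases he : e ∈ Tᶜ
  · have h1 : Tᶜ ∩ ({e} : Finset E) = {e} := by
      ext f
      simp only [Finset.mem_inter, Finset.mem_singleton]
      exact ⟨fun h => h.2, fun h => ⟨h ▸ he, h⟩⟩
    rw [tauStep, dif_pos he, h1]
  · have h1 : Tᶜ ∩ ({e} : Finset E) = ∅ := by
      ext f
      simp only [Finset.mem_inter, Finset.mem_singleton, Finset.notMem_empty, iff_false]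
      rintro ⟨hf, rfl⟩
      exact he hf
    rw [tauStep, dif_neg he, h1]
    ext f
    simp [Finset.mem_symmDiff]

theorem tauStep_tauStep (e : E) (τ : {τ : Finset E // τ ⊆ Tᶜ}) :
    tauStep T e (tauStep T e τ) = τ := by
  apply Subtype.ext
  rw [tauStep_val, tauStep_val, symmDiff_assoc, symmDiff_self]
  simp

/-- accumulated change of the second coordinate along a walk -/
def tauWalk (T : Finset E) : ∀ {u v : V}, G.Walk u v →
    {τ : Finset E // τ ⊆ Tᶜ} → {τ : Finset E // τ ⊆ Tᶜ}
  | _, _, .nil _ => fun τ => τ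
  | _, _, .cons e _ p => fun τ => tauWalk T p (tauStep T e τ)

theorem tauWalk_append : ∀ {u v w : V} (p : G.Walk u v) (q : G.Walk v w)
    (τ : {τ : Finset E // τ ⊆ Tᶜ}),
    tauWalk T (WalkAux.append p q) τ = tauWalk T q (tauWalk T p τ)
  | _, _, _, .nil _, q, τ => rfl
  | _, _, _, .cons e h p, q, τ => tauWalk_append p q (tauStep T e τ)

theorem edgeParity_subset_edges {u v : V} (p : G.Walk u v) {e : E}
    (he : e ∈ edgeParity p) : e ∈ p.edges := by
  rw [mem_edgeParity] at he
  by_contra hc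
  rw [List.count_eq_zero_of_not_mem hc] at he
  simp at he

theorem tauWalk_val : ∀ {u v : V} (p : G.Walk u v) (τ : {τ : Finset E // τ ⊆ Tᶜ}),
    (tauWalk T p τ).1 = symmDiff τ.1 (Tᶜ ∩ edgeParity p)
  | _, _, .nil _, τ => by
      rw [tauWalk, edgeParity_nil]
      ext f
      simp [Finset.mem_symmDiff]
  | _, _, .cons e h p, τ => by
      rw [tauWalk, tauWalk_val p, tauStep_val, edgeParity_cons, symmDiff_assoc]
      congr 1
      ext f
      simp only [Finset.mem_symmDiff, Finset.mem_inter, Finset.mem_singleton]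
      by_cases hfT : f ∈ Tᶜ <;> by_cases hfe : f = e <;> simp [hfT, hfe] <;> tauto

theorem tauWalk_T_edges {u v : V} (p : G.Walk u v) (hp : ∀ f ∈ p.edges, f ∈ T)
    (τ : {τ : Finset E // τ ⊆ Tᶜ}) : tauWalk T p τ = τ := by
  apply Subtype.ext
  rw [tauWalk_val]
  have : Tᶜ ∩ edgeParity p = ∅ := by
    ext f
    simp only [Finset.mem_inter, Finset.notMem_empty, iff_false]
    rintro ⟨h1, h2⟩
    exact (Finset.mem_compl.mp h1) (hp f (edgeParity_subset_edges p h2))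
  rw [this]
  simp

/-- endpoints in the cover -/
theorem cover_endsAt {f : E × {τ : Finset E // τ ⊆ Tᶜ}} {x x' : V × {τ : Finset E // τ ⊆ Tᶜ}}
    (h : (cover G T).EndsAt f x x') :
    G.EndsAt f.1 x.1 x'.1 ∧ x'.2 = tauStep T f.1 x.2 := by
  rcases h with ⟨h1, h2⟩ | ⟨h1, h2⟩
  · refine ⟨Or.inl ⟨congrArg Prod.fst h1, congrArg Prod.fst h2⟩, ?_⟩
    have e1 : f.2 = x.2 := congrArg Prod.snd h1
    have e2 : x'.2 = tauStep T f.1 f.2 := (congrArg Prod.snd h2).symm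
    rw [e2, e1]
  · refine ⟨Or.inr ⟨congrArg Prod.fst h1, congrArg Prod.fst h2⟩, ?_⟩
    have e1 : f.2 = x'.2 := congrArg Prod.snd h1
    have e2 : x.2 = tauStep T f.1 f.2 := (congrArg Prod.snd h2).symm
    rw [← e1, e2, tauStep_tauStep]

theorem length_projWalk : ∀ {x y : V × {τ : Finset E // τ ⊆ Tᶜ}}
    (q : (cover G T).Walk x y), (projWalk q).length = q.length
  | _, _, .nil _ => rfl
  | _, _, .cons f h q => by simp [projWalk, length_projWalk q]

theorem edges_projWalk : ∀ {x y : V × {τ : Finset E // τ ⊆ Tᶜ}}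
    (q : (cover G T).Walk x y), (projWalk q).edges = q.edges.map Prod.fst
  | _, _, .nil _ => rfl
  | _, _, .cons f h q => by simp [projWalk, edges_projWalk q]

theorem tau_projWalk : ∀ {x y : V × {τ : Finset E // τ ⊆ Tᶜ}}
    (q : (cover G T).Walk x y), tauWalk T (projWalk q) x.2 = y.2
  | _, _, .nil _ => rfl
  | x, y, .cons f h q => by
      obtain ⟨h1, h2⟩ := cover_endsAt h
      have hred : tauWalk T (projWalk (Walk.cons f h q)) x.2
          = tauWalk T (projWalk q) (tauStep T f.1 x.2) := rfl
      rw [hred, ← h2, tau_projWalk q]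

/-- lifting a walk to the cover -/
def liftWalk : ∀ {u v : V} (p : G.Walk u v) (τ : {τ : Finset E // τ ⊆ Tᶜ}),
    (cover G T).Walk (u, τ) (v, tauWalk T p τ)
  | _, _, .nil w, τ => .nil (w, τ)
  | u, v, .cons (v := m) e h p, τ =>
      .cons (e, if G.src e = u ∧ G.tgt e = m then τ else tauStep T e τ)
        (by
          by_cases hc : G.src e = u ∧ G.tgt e = m
          · rw [if_pos hc]
            exact Or.inl ⟨Prod.ext hc.1 rfl, Prod.ext hc.2 rfl⟩
          · rw [if_neg hc]
            have h' : G.src e = m ∧ G.tgt e = u := h.resolve_left hc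
            exact Or.inr ⟨Prod.ext h'.1 rfl, Prod.ext h'.2 (tauStep_tauStep e τ)⟩)
        (liftWalk p (tauStep T e τ))

theorem length_liftWalk : ∀ {u v : V} (p : G.Walk u v) (τ : {τ : Finset E // τ ⊆ Tᶜ}),
    (liftWalk (T := T) (G := G) p τ).length = p.length
  | _, _, .nil _, τ => rfl
  | _, _, .cons e h p, τ => congrArg (· + 1) (length_liftWalk p (tauStep T e τ))

theorem edges_liftWalk : ∀ {u v : V} (p : G.Walk u v) (τ : {τ : Finset E // τ ⊆ Tᶜ}),
    (liftWalk (T := T) (G := G) p τ).edges.map Prod.fst = p.edges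
  | _, _, .nil _, τ => rfl
  | _, _, .cons e h p, τ => congrArg (e :: ·) (edges_liftWalk p (tauStep T e τ))

end Cover
end MGAux
namespace MGAux
open Multigraph
section Connect
variable {V E : Type} [Fintype E] [DecidableEq V] [DecidableEq E]
  {G : Multigraph V E} {T : Finset E}

theorem symm_cancel {α : Type} [DecidableEq α] {a b c : Finset α}
    (h : symmDiff a b = symmDiff a c) : b = c := by
  rw [← symmDiff_symmDiff_cancel_left a b, h, symmDiff_symmDiff_cancel_left]

theorem gadget (hT1 : ∀ u v : V, ∃ p : G.Walk u v, ∀ f ∈ p.edges, f ∈ T) (w : V) :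
    ∀ δ : Finset E, δ ⊆ Tᶜ →
      ∃ g : G.Walk w w, ∀ τ : {τ : Finset E // τ ⊆ Tᶜ},
        (tauWalk T g τ).1 = symmDiff τ.1 δ := by
  intro δ
  induction δ using Finset.induction_on with
  | empty =>
    intro _
    refine ⟨.nil w, fun τ => ?_⟩
    rw [tauWalk]
    ext f
    simp [Finset.mem_symmDiff]
  | @insert e δ' henm IH =>
    intro hsub
    have heT : e ∈ Tᶜ := hsub (Finset.mem_insert_self _ _)
    have hδ' : δ' ⊆ Tᶜ := fun f hf => hsub (Finset.mem_insert_of_mem hf)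
    obtain ⟨g', hg'⟩ := IH hδ'
    obtain ⟨t1, ht1⟩ := hT1 w (G.src e)
    obtain ⟨t2, ht2⟩ := hT1 (G.tgt e) w
    refine ⟨WalkAux.append t1 (Walk.cons e (Or.inl ⟨rfl, rfl⟩) (WalkAux.append t2 g')),
      fun τ => ?_⟩
    rw [tauWalk_append, tauWalk_T_edges t1 ht1 τ]
    have hred : tauWalk T (Walk.cons e (Or.inl ⟨rfl, rfl⟩ :
        G.EndsAt e (G.src e) (G.tgt e)) (WalkAux.append t2 g')) τ
        = tauWalk T (WalkAux.append t2 g') (tauStep T e τ) := rfl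
    rw [hred, tauWalk_append, tauWalk_T_edges t2 ht2, hg', tauStep_val]
    have h1 : Tᶜ ∩ ({e} : Finset E) = {e} := by
      ext f
      simp only [Finset.mem_inter, Finset.mem_singleton]
      exact ⟨fun h => h.2, fun h => ⟨h ▸ heT, h⟩⟩
    rw [h1, symmDiff_assoc]
    congr 1
    ext f
    simp only [Finset.mem_symmDiff, Finset.mem_singleton, Finset.mem_insert]
    by_cases hfe : f = e <;> simp [hfe] <;> tauto

theorem existsAdmissible (hT1 : ∀ u v : V, ∃ p : G.Walk u v, ∀ f ∈ p.edges, f ∈ T)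
    (x y : V × {τ : Finset E // τ ⊆ Tᶜ}) :
    ∃ p : G.Walk x.1 y.1, tauWalk T p x.2 = y.2 := by
  have hδ : symmDiff x.2.1 y.2.1 ⊆ Tᶜ := by
    intro f hf
    rcases Finset.mem_symmDiff.mp hf with ⟨h1, _⟩ | ⟨h1, _⟩
    · exact x.2.2 h1
    · exact y.2.2 h1
  obtain ⟨g, hg⟩ := gadget hT1 y.1 (symmDiff x.2.1 y.2.1) hδ
  obtain ⟨p0, hp0⟩ := hT1 x.1 y.1
  refine ⟨WalkAux.append p0 g, ?_⟩
  apply Subtype.ext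
  rw [tauWalk_append, tauWalk_T_edges p0 hp0, hg, symmDiff_symmDiff_cancel_left]

theorem graphDist_cover_eq (x y : V × {τ : Finset E // τ ⊆ Tᶜ}) :
    graphDist (cover G T) x y
      = sInf {n | ∃ p : G.Walk x.1 y.1, tauWalk T p x.2 = y.2 ∧ p.length = n} := by
  obtain ⟨x1, τx⟩ := x
  obtain ⟨y1, τy⟩ := y
  show graphDist (cover G T) (x1, τx) (y1, τy)
      = sInf {n | ∃ p : G.Walk x1 y1, tauWalk T p τx = τy ∧ p.length = n}
  unfold graphDist
  congr 1
  ext n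
  simp only [Set.mem_setOf_eq]
  constructor
  · rintro ⟨q, rfl⟩
    exact ⟨projWalk q, tau_projWalk q, length_projWalk q⟩
  · rintro ⟨p, hp, rfl⟩
    subst hp
    exact ⟨liftWalk p τx, length_liftWalk p τx⟩

theorem separates_iff (x y : V × {τ : Finset E // τ ⊆ Tᶜ}) (e : E) :
    (cover G T).Separates (wallOf G T e) x y ↔
      ∀ p : G.Walk x.1 y.1, tauWalk T p x.2 = y.2 → e ∈ p.edges := by
  obtain ⟨x1, τx⟩ := x
  obtain ⟨y1, τy⟩ := y
  show _ ↔ ∀ p : G.Walk x1 y1, tauWalk T p τx = τy → e ∈ p.edges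
  constructor
  · intro hsep p hp
    by_contra he
    apply hsep
    subst hp
    refine ⟨liftWalk p τx, fun f hf hfe => ?_⟩
    have h1 : f.1 ∈ (liftWalk (T := T) p τx).edges.map Prod.fst :=
      List.mem_map_of_mem hf
    rw [edges_liftWalk] at h1
    have hfe' : f.1 = e := hfe
    exact he (hfe' ▸ h1)
  · rintro hall ⟨q, hq⟩
    have h1 := hall (projWalk q) (tau_projWalk q)
    rw [edges_projWalk] at h1
    obtain ⟨f, hfq, hf1⟩ := List.mem_map.mp h1
    exact hq f hfq hf1

end Connect
end MGAux

open MGAux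

open Multigraph in
/-- For a `ℤ/2`-pair `(G̃, G)` and vertices `x`, `y` of `G̃`:
`d_W(x,y) < girth G` if and only if `d_{G̃}(x,y) < girth G`, and if these inequalities
hold then `d_W(x,y) = d_{G̃}(x,y)`. -/
theorem wallDist_eq_graphDist_below_girth {V E : Type} [Fintype V] [Fintype E]
    [DecidableEq V] [DecidableEq E] (G : Multigraph V E)
    (hG : G.TwoConnected) (T : Finset E) (hT : G.IsSpanningTree T)
    (x y : V × {τ : Finset E // τ ⊆ Tᶜ}) :
    (wallDist G T x y < G.girth ↔ graphDist (cover G T) x y < G.girth) ∧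
    (wallDist G T x y < G.girth → wallDist G T x y = graphDist (cover G T) x y) := by
  obtain ⟨hT1, hT2⟩ := hT
  set Fs : Set E := {e : E | (cover G T).Separates (wallOf G T e) x y} with hFs
  have hWD : wallDist G T x y = Fs.ncard := rfl
  obtain ⟨p₀, hp₀⟩ := existsAdmissible (T := T) hT1 x y
  -- M1 : wall distance is at most graph distance
  have hM1 : wallDist G T x y ≤ graphDist (cover G T) x y := by
    have hA : {n | ∃ p : G.Walk x.1 y.1, tauWalk T p x.2 = y.2 ∧ p.length = n}.Nonempty :=
      ⟨p₀.length, p₀, hp₀, rfl⟩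
    obtain ⟨p, hp, hlen⟩ := Nat.sInf_mem hA
    have hsub : Fs ⊆ ↑p.edges.toFinset := by
      intro e he
      have h1 := (separates_iff (G := G) (T := T) x y e).mp he p hp
      simpa using h1
    have h1 : Fs.ncard ≤ p.edges.toFinset.card := by
      have h2 := Set.ncard_le_ncard hsub (Set.toFinite _)
      rwa [Set.ncard_coe_finset] at h2
    have h2 : p.edges.toFinset.card ≤ p.edges.length := List.toFinset_card_le _
    rw [hWD, graphDist_cover_eq x y, ← hlen]
    exact le_trans h1 (le_trans h2 (le_of_eq (WalkAux.length_edges p)))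
  -- parity uniqueness
  have hpar : ∀ p : G.Walk x.1 y.1, tauWalk T p x.2 = y.2 → edgeParity p = edgeParity p₀ := by
    intro p hp
    have hS : Tᶜ ∩ edgeParity p = Tᶜ ∩ edgeParity p₀ := by
      apply symm_cancel (a := x.2.1)
      have h1 := tauWalk_val (T := T) p x.2
      have h2 := tauWalk_val (T := T) p₀ x.2
      rw [hp] at h1
      rw [hp₀] at h2
      rw [← h1, ← h2]
    have hzT : symmDiff (edgeParity p) (edgeParity p₀) ⊆ T := by
      intro f hf
      by_contra hfT
      have hfT' : f ∈ Tᶜ := Finset.mem_compl.mpr hfT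
      rcases Finset.mem_symmDiff.mp hf with ⟨h1, h2⟩ | ⟨h1, h2⟩
      · have h3 : f ∈ Tᶜ ∩ edgeParity p := Finset.mem_inter.mpr ⟨hfT', h1⟩
        rw [hS] at h3
        exact h2 (Finset.mem_inter.mp h3).2
      · have h3 : f ∈ Tᶜ ∩ edgeParity p₀ := Finset.mem_inter.mpr ⟨hfT', h1⟩
        rw [← hS] at h3
        exact h2 (Finset.mem_inter.mp h3).2
    have heven : ∀ w, degp G (symmDiff (edgeParity p) (edgeParity p₀)) w = 0 := by
      intro w
      rw [degp_symmDiff, degp_edgeParity p w, degp_edgeParity p₀ w]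
      exact (by decide : ∀ a : ZMod 2, a + a = 0) _
    have hze := tree_even_empty hT1 hT2 hzT heven
    exact symmDiff_eq_bot.mp (hze.trans rfl)
  set D : Finset E := edgeParity p₀ with hD
  have hDF : (↑D : Set E) ⊆ Fs := by
    intro e he
    rw [hFs, Set.mem_setOf_eq, separates_iff]
    intro p hp
    refine edgeParity_subset_edges p ?_
    rw [hpar p hp]
    exact_mod_cast he
  have hDcard : D.card ≤ Fs.ncard := by
    have h1 := Set.ncard_le_ncard hDF (Set.toFinite _)
    rwa [Set.ncard_coe_finset] at h1
  have hbD : ∀ w, degp G D w = (if x.1 = w then 1 else 0) + (if y.1 = w then 1 else 0) :=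
    degp_edgeParity p₀
  -- M2 : below the girth, graph distance is at most wall distance
  have hM2 : wallDist G T x y < G.girth → graphDist (cover G T) x y ≤ wallDist G T x y := by
    intro hlt
    rw [hWD] at hlt ⊢
    rw [graphDist_cover_eq x y]
    rcases eq_or_ne x.1 y.1 with hxy | hxy
    · have hevenD : ∀ w, degp G D w = 0 := by
        intro w
        rw [hbD w, hxy]
        exact (by decide : ∀ a : ZMod 2, a + a = 0) _
      have hDempty : D = ∅ := by
        by_contra hne
        have h1 := girth_le_of_even (G := G) (Finset.nonempty_iff_ne_empty.mpr hne) hevenD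
        omega
      have hτ : x.2 = y.2 := by
        apply Subtype.ext
        rw [← hp₀, tauWalk_val, ← hD, hDempty, Finset.inter_empty]
        ext f
        simp [Finset.mem_symmDiff]
      have hxy2 : x = y := Prod.ext hxy hτ
      subst hxy2
      exact le_trans (Nat.sInf_le ⟨Walk.nil x.1, rfl, rfl⟩) (Nat.zero_le _)
    · obtain ⟨p, hnd, hsubD, hrem⟩ := existsTrail (G := G) D x.1 y.1 hxy hbD
      have hRempty : D \ p.edges.toFinset = ∅ := by
        by_contra hne
        have h1 := girth_le_of_even (G := G) (Finset.nonempty_iff_ne_empty.mpr hne) hrem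
        have h2 : (D \ p.edges.toFinset).card ≤ D.card :=
          Finset.card_le_card Finset.sdiff_subset
        omega
      have hDeq : p.edges.toFinset = D := by
        apply Finset.Subset.antisymm
        · intro f hf
          exact hsubD f (List.mem_toFinset.mp hf)
        · intro f hf
          by_contra hc
          have h1 : f ∈ D \ p.edges.toFinset := Finset.mem_sdiff.mpr ⟨hf, hc⟩
          rw [hRempty] at h1
          simp at h1
      have hEP : edgeParity p = D := by
        ext f
        rw [mem_edgeParity]
        constructor
        · intro h
          have h1 : f ∈ p.edges := by
            by_contra hc
            rw [List.count_eq_zero_of_not_mem hc] at h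
            simp at h
          rw [← hDeq]
          exact List.mem_toFinset.mpr h1
        · intro h
          rw [← hDeq] at h
          have h1 : p.edges.count f = 1 := List.count_eq_one_of_mem hnd (List.mem_toFinset.mp h)
          rw [h1]
      have hadm : tauWalk T p x.2 = y.2 := by
        apply Subtype.ext
        rw [tauWalk_val, hEP, hD, ← tauWalk_val, hp₀]
      have hlenp : p.length = D.card := by
        rw [← WalkAux.length_edges, ← List.toFinset_card_of_nodup hnd, hDeq]
      have h1 : sInf {n | ∃ q : G.Walk x.1 y.1, tauWalk T q x.2 = y.2 ∧ q.length = n}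
          ≤ D.card := Nat.sInf_le ⟨p, hadm, hlenp⟩
      omega
  exact ⟨⟨fun h => lt_of_le_of_lt (hM2 h) h, fun h => lt_of_le_of_lt hM1 h⟩,
    fun h => le_antisymm hM1 (hM2 h)⟩
end

section
/- Let Γ₀ = F₂ be the free group of rank two, and inductively define Γ_n = Γ_{n−1}^{(2)}, the normal subgroup of Γ_{n−1} generated by all squares of elements of Γ_{n−1}. Then ⋂_{n≥1} Γ_n = {1}. -/
/-- The subgroup `Γ^{(2)}` of a group `Γ`: the normal subgroup generated by the
squares of all elements of `Γ`. -/
def sqNormal (Γ : Type) [Group Γ] : Subgroup Γ :=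
  Subgroup.normalClosure {x : Γ | ∃ g : Γ, x = g ^ 2}

/-- The free group of rank two. -/
abbrev F2 : Type := FreeGroup (Fin 2)

/-- The sequence `Γ₀ = F₂`, `Γ_n = Γ_{n-1}^{(2)}`, each viewed as a subgroup of `F₂`. -/
def Gamma : ℕ → Subgroup F2
  | 0 => ⊤
  | n + 1 => (sqNormal (Gamma n)).map (Gamma n).subtype

namespace MagnusAux

abbrev Word := List (Fin 2)

@[ext] structure PS where
  coeff : Word → ℤ

instance : Zero PS := ⟨⟨fun _ => 0⟩⟩
instance : One PS := ⟨⟨fun u => if u = [] then 1 else 0⟩⟩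
instance : Add PS := ⟨fun f g => ⟨fun u => f.coeff u + g.coeff u⟩⟩
instance : Neg PS := ⟨fun f => ⟨fun u => -f.coeff u⟩⟩
instance : Mul PS :=
  ⟨fun f g => ⟨fun u => ∑ i ∈ Finset.range (u.length + 1),
    f.coeff (u.take i) * g.coeff (u.drop i)⟩⟩

@[simp] lemma zero_coeff (u : Word) : (0 : PS).coeff u = 0 := rfl
@[simp] lemma one_coeff (u : Word) : (1 : PS).coeff u = if u = [] then 1 else 0 := rfl
@[simp] lemma add_coeff (f g : PS) (u : Word) : (f + g).coeff u = f.coeff u + g.coeff u := rfl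
@[simp] lemma neg_coeff (f : PS) (u : Word) : (-f).coeff u = -f.coeff u := rfl
lemma mul_coeff (f g : PS) (u : Word) :
    (f * g).coeff u = ∑ i ∈ Finset.range (u.length + 1),
      f.coeff (u.take i) * g.coeff (u.drop i) := rfl

instance : AddCommGroup PS where
  add_assoc f g h := by ext u; simp [add_assoc]
  zero_add f := by ext u; simp
  add_zero f := by ext u; simp
  neg_add_cancel f := by ext u; simp
  add_comm f g := by ext u; simp [add_comm]
  nsmul := nsmulRec
  zsmul := zsmulRec

lemma one_mul' (f : PS) : 1 * f = f := by
  ext u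
  rw [mul_coeff]
  rw [Finset.sum_eq_single 0]
  · simp
  · intro i hi hne
    rcases u with _ | ⟨a, t⟩
    · simp at hi; omega
    · have : (a :: t).take i ≠ [] := by
        cases i with
        | zero => omega
        | succ j => simp
      simp [this]
  · simp

lemma mul_one' (f : PS) : f * 1 = f := by
  ext u
  rw [mul_coeff]
  rw [Finset.sum_eq_single u.length]
  · simp
  · intro i hi hne
    have hi' : i < u.length := by simp at hi; omega
    have : u.drop i ≠ [] := by
      simp [List.drop_eq_nil_iff]; omega
    simp [this]
  · simp

lemma zero_mul' (f : PS) : 0 * f = 0 := by ext u; simp [mul_coeff]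
lemma mul_zero' (f : PS) : f * 0 = 0 := by ext u; simp [mul_coeff]

lemma left_distrib' (f g h : PS) : f * (g + h) = f * g + f * h := by
  ext u; simp [mul_coeff, mul_add, Finset.sum_add_distrib]

lemma right_distrib' (f g h : PS) : (f + g) * h = f * h + g * h := by
  ext u; simp [mul_coeff, add_mul, Finset.sum_add_distrib]

lemma mul_assoc' (f g h : PS) : f * g * h = f * (g * h) := by
  ext u
  rw [mul_coeff, mul_coeff]
  simp only [mul_coeff, Finset.sum_mul, Finset.mul_sum]
  rw [Finset.sum_sigma', Finset.sum_sigma']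
  refine Finset.sum_nbij' (fun p => ⟨p.2, p.1 - p.2⟩) (fun p => ⟨p.1 + p.2, p.1⟩) ?_ ?_ ?_ ?_ ?_
  · rintro ⟨j, i⟩ h
    simp only [Finset.mem_sigma, Finset.mem_range, List.length_take, List.length_drop] at h ⊢
    omega
  · rintro ⟨i, m⟩ h
    simp only [Finset.mem_sigma, Finset.mem_range, List.length_take, List.length_drop] at h ⊢
    omega
  · rintro ⟨j, i⟩ h
    simp only [Finset.mem_sigma, Finset.mem_range, List.length_take] at h
    have hij : i ≤ j := by omega
    simp [Nat.add_sub_cancel' hij]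
  · rintro ⟨i, m⟩ h
    simp
  · rintro ⟨j, i⟩ h
    simp only [Finset.mem_sigma, Finset.mem_range, List.length_take] at h
    have hij : i ≤ j := by omega
    have hjn : j ≤ u.length := by omega
    dsimp only
    rw [List.take_take, min_eq_left hij, List.drop_take, List.drop_drop,
      Nat.add_sub_cancel' hij, mul_assoc]

instance : Ring PS where
  __ := (inferInstance : AddCommGroup PS)
  mul_assoc := mul_assoc'
  one_mul := one_mul'
  mul_one := mul_one'
  left_distrib := left_distrib'
  right_distrib := right_distrib'
  zero_mul := zero_mul'
  mul_zero := mul_zero'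

/-! ### The Magnus units -/

def X (v : Fin 2) : PS := ⟨fun u => if u = [v] then 1 else 0⟩

@[simp] lemma X_coeff (v : Fin 2) (u : Word) : (X v).coeff u = if u = [v] then 1 else 0 := rfl

lemma onePlusX_coeff (v : Fin 2) (u : Word) :
    (1 + X v).coeff u = if u = [] then 1 else if u = [v] then 1 else 0 := by
  rcases u with _ | ⟨a, t⟩ <;> simp

lemma coeff_nil_mul (f g : PS) : (f * g).coeff [] = f.coeff [] * g.coeff [] := by
  rw [mul_coeff]; simp

lemma onePlusX_mul_coeff (v : Fin 2) (f : PS) (a : Fin 2) (t : Word) :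
    ((1 + X v) * f).coeff (a :: t) =
      f.coeff (a :: t) + if a = v then f.coeff t else 0 := by
  rw [mul_coeff]
  simp only [List.length_cons]
  rw [Finset.sum_range_succ', Finset.sum_range_succ']
  have h1 : ∀ i ∈ Finset.range t.length,
      (1 + X v).coeff ((a :: t).take (i + 1 + 1)) * f.coeff ((a :: t).drop (i + 1 + 1)) = 0 := by
    intro i hi
    simp only [Finset.mem_range] at hi
    have hlen : ((a :: t).take (i + 1 + 1)).length = i + 2 := by
      rw [List.length_take]; simp; omega
    have h2 : (a :: t).take (i + 1 + 1) ≠ [] := by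
      intro h; rw [h] at hlen; simp at hlen
    have h3 : (a :: t).take (i + 1 + 1) ≠ [v] := by
      intro h; rw [h] at hlen; simp at hlen
    rw [onePlusX_coeff, if_neg h2, if_neg h3, zero_mul]
  rw [Finset.sum_eq_zero h1]
  simp only [zero_add, List.take_zero, List.drop_zero]
  rw [onePlusX_coeff, onePlusX_coeff]
  have ht1 : (a :: t).take 1 = [a] := rfl
  have hd1 : (a :: t).drop 1 = t := rfl
  rw [ht1, hd1]
  simp only [if_neg (List.cons_ne_nil a []), reduceIte]
  have : ([a] : Word) = [v] ↔ a = v := by simp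
  by_cases hav : a = v
  · rw [if_pos (this.2 hav), if_pos hav]; ring
  · rw [if_neg (fun h => hav (this.1 h)), if_neg hav]; ring

lemma mul_onePlusX_coeff (v : Fin 2) (f : PS) (w : Word) (a : Fin 2) :
    (f * (1 + X v)).coeff (w ++ [a]) =
      f.coeff (w ++ [a]) + if a = v then f.coeff w else 0 := by
  rw [mul_coeff]
  simp only [List.length_append, List.length_cons, List.length_nil, zero_add]
  rw [Finset.sum_range_succ, Finset.sum_range_succ]
  have h1 : ∀ i ∈ Finset.range w.length,
      f.coeff ((w ++ [a]).take i) * (1 + X v).coeff ((w ++ [a]).drop i) = 0 := by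
    intro i hi
    simp only [Finset.mem_range] at hi
    have hlen : ((w ++ [a]).drop i).length = w.length + 1 - i := by
      rw [List.length_drop]; simp
    have h2 : (w ++ [a]).drop i ≠ [] := by
      intro h; rw [h] at hlen; simp at hlen; omega
    have h3 : (w ++ [a]).drop i ≠ [v] := by
      intro h; rw [h] at hlen; simp at hlen; omega
    rw [onePlusX_coeff, if_neg h2, if_neg h3, mul_zero]
  rw [Finset.sum_eq_zero h1]
  have htw : (w ++ [a]).take w.length = w := List.take_left' rfl
  have hdw : (w ++ [a]).drop w.length = [a] := List.drop_left' rfl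
  have htw1 : (w ++ [a]).take (w.length + 1) = w ++ [a] := by
    apply List.take_of_length_le; simp
  have hdw1 : (w ++ [a]).drop (w.length + 1) = [] := by
    apply List.drop_of_length_le; simp
  rw [htw, hdw, htw1, hdw1]
  rw [onePlusX_coeff, onePlusX_coeff]
  simp only [if_neg (List.cons_ne_nil a []), reduceIte]
  have : ([a] : Word) = [v] ↔ a = v := by simp
  by_cases hav : a = v
  · rw [if_pos (this.2 hav), if_pos hav]; ring
  · rw [if_neg (fun h => hav (this.1 h)), if_neg hav]; ring

def invX (v : Fin 2) : PS :=
  ⟨fun u => if u = List.replicate u.length v then (-1) ^ u.length else 0⟩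

@[simp] lemma invX_coeff (v : Fin 2) (u : Word) :
    (invX v).coeff u = if u = List.replicate u.length v then (-1 : ℤ) ^ u.length else 0 := rfl

lemma onePlusX_mul_invX (v : Fin 2) : (1 + X v) * invX v = 1 := by
  ext u
  rcases u with _ | ⟨a, t⟩
  · rw [coeff_nil_mul]; simp
  · rw [onePlusX_mul_coeff]
    have hcons : (a :: t = List.replicate (a :: t).length v) ↔
        (a = v ∧ t = List.replicate t.length v) := by
      simp [List.replicate_succ]
    simp only [invX_coeff, one_coeff, if_neg (List.cons_ne_nil a t)]
    by_cases hav : a = v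
    · by_cases hrep : t = List.replicate t.length v
      · rw [if_pos (hcons.2 ⟨hav, hrep⟩), if_pos hav, if_pos hrep]
        simp [List.length_cons, pow_succ]
      · rw [if_neg (fun h => hrep (hcons.1 h).2), if_pos hav, if_neg hrep]; ring
    · rw [if_neg (fun h => hav (hcons.1 h).1), if_neg hav]; ring

lemma invX_mul_onePlusX (v : Fin 2) : invX v * (1 + X v) = 1 := by
  ext u
  rcases List.eq_nil_or_concat u with rfl | ⟨w, a, rfl⟩
  · rw [coeff_nil_mul]; simp
  · rw [List.concat_eq_append, mul_onePlusX_coeff]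
    have hne : w ++ [a] ≠ [] := by simp
    have hlen : (w ++ [a]).length = w.length + 1 := by simp
    have hcons : (w ++ [a] = List.replicate (w ++ [a]).length v) ↔
        (a = v ∧ w = List.replicate w.length v) := by
      rw [hlen, List.replicate_succ']
      constructor
      · intro h
        have h2 := List.append_inj h (by simp)
        exact ⟨by simpa using h2.2, h2.1⟩
      · rintro ⟨rfl, h⟩; rw [← h]
    simp only [invX_coeff, one_coeff, if_neg hne]
    by_cases hav : a = v
    · by_cases hrep : w = List.replicate w.length v
      · rw [if_pos (hcons.2 ⟨hav, hrep⟩), if_pos hav, if_pos hrep, hlen]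
        simp [pow_succ]
      · rw [if_neg (fun h => hrep (hcons.1 h).2), if_pos hav, if_neg hrep]; ring
    · rw [if_neg (fun h => hav (hcons.1 h).1), if_neg hav]; ring

def U (v : Fin 2) : PSˣ := ⟨1 + X v, invX v, onePlusX_mul_invX v, invX_mul_onePlusX v⟩

/-! ### The dyadic filtration -/

def Jmem (n : ℕ) (f : PS) : Prop := ∀ u : Word, (2 : ℤ) ^ (n - u.length) ∣ f.coeff u

lemma Jmem.anti {m n : ℕ} (h : m ≤ n) {f : PS} (hf : Jmem n f) : Jmem m f := fun u =>
  dvd_trans (pow_dvd_pow 2 (by omega)) (hf u)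

lemma Jmem.add {n : ℕ} {f g : PS} (hf : Jmem n f) (hg : Jmem n g) : Jmem n (f + g) :=
  fun u => dvd_add (hf u) (hg u)

lemma Jmem.neg {n : ℕ} {f : PS} (hf : Jmem n f) : Jmem n (-f) := fun u => (hf u).neg_right

lemma Jmem.zero (n : ℕ) : Jmem n 0 := fun u => dvd_zero _

lemma Jmem.mul_left {n : ℕ} (f : PS) {g : PS} (hg : Jmem n g) : Jmem n (f * g) := by
  intro u
  rw [mul_coeff]
  refine Finset.dvd_sum fun i hi => Dvd.dvd.mul_left ?_ _
  exact dvd_trans (pow_dvd_pow 2 (by rw [List.length_drop]; omega)) (hg (u.drop i))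

lemma Jmem.mul_right {n : ℕ} {f : PS} (hf : Jmem n f) (g : PS) : Jmem n (f * g) := by
  intro u
  rw [mul_coeff]
  refine Finset.dvd_sum fun i hi => Dvd.dvd.mul_right ?_ _
  exact dvd_trans (pow_dvd_pow 2 (by rw [List.length_take]; omega)) (hf (u.take i))

lemma Jmem.mul {m n : ℕ} {f g : PS} (hf : Jmem m f) (hg : Jmem n g) : Jmem (m + n) (f * g) := by
  intro u
  rw [mul_coeff]
  refine Finset.dvd_sum fun i hi => ?_
  simp only [Finset.mem_range] at hi
  have h1 : (2 : ℤ) ^ (m + n - u.length) ∣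
      2 ^ ((m - (u.take i).length) + (n - (u.drop i).length)) :=
    pow_dvd_pow 2 (by rw [List.length_take, List.length_drop]; omega)
  rw [pow_add] at h1
  exact h1.trans (mul_dvd_mul (hf _) (hg _))

lemma Jmem.two_mul {n : ℕ} {f : PS} (hf : Jmem n f) : Jmem (n + 1) ((2 : PS) * f) := by
  rw [_root_.two_mul]
  intro u
  have h2 : f.coeff u + f.coeff u = 2 * f.coeff u := by ring
  rw [add_coeff, h2]
  refine dvd_trans (pow_dvd_pow 2 (show n + 1 - u.length ≤ (n - u.length) + 1 by omega)) ?_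
  rw [pow_succ, mul_comm ((2:ℤ) ^ (n - u.length)) 2]
  exact mul_dvd_mul dvd_rfl (hf u)

/-- The filtration subgroups of `PSˣ`. -/
def G (n : ℕ) : Subgroup PSˣ where
  carrier := {g | Jmem n ((g : PS) - 1)}
  one_mem' := by simpa using Jmem.zero n
  mul_mem' := by
    intro a b ha hb
    have h : (a : PS) * (b : PS) - 1 = (a : PS) * ((b : PS) - 1) + ((a : PS) - 1) := by
      noncomm_ring
    show Jmem n (((a * b : PSˣ) : PS) - 1)
    rw [Units.val_mul, h]
    exact (Jmem.mul_left (a : PS) hb).add ha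
  inv_mem' := by
    intro a ha
    have h : ((a⁻¹ : PSˣ) : PS) - 1 = ((a⁻¹ : PSˣ) : PS) * (-((a : PS) - 1)) := by
      rw [mul_neg, mul_sub, mul_one, a.inv_mul]
      exact (neg_sub _ _).symm
    simpa [Set.mem_setOf_eq, h] using Jmem.mul_left ((a⁻¹ : PSˣ) : PS) ha.neg

lemma mem_G {n : ℕ} {g : PSˣ} : g ∈ G n ↔ Jmem n ((g : PS) - 1) := Iff.rfl

instance G_normal (n : ℕ) : (G n).Normal := by
  constructor
  intro a ha g
  rw [mem_G]
  have h : (g : PS) * (((a : PS) - 1) * ((g⁻¹ : PSˣ) : PS)) =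
      ((g * a * g⁻¹ : PSˣ) : PS) - (g : PS) * ((g⁻¹ : PSˣ) : PS) := by
    push_cast; noncomm_ring
  have h2 : ((g * a * g⁻¹ : PSˣ) : PS) - 1 = (g : PS) * (((a : PS) - 1) * ((g⁻¹ : PSˣ) : PS)) := by
    rw [h, g.mul_inv]
  rw [h2]
  exact Jmem.mul_left _ ((mem_G.1 ha).mul_right _)

lemma G_anti {m n : ℕ} (h : m ≤ n) : G n ≤ G m := fun g hg => (mem_G.1 hg).anti h

lemma sq_mem_G {n : ℕ} (hn : 1 ≤ n) {g : PSˣ} (hg : g ∈ G n) : g ^ 2 ∈ G (n + 1) := by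
  rw [mem_G] at hg ⊢
  have h : ((g ^ 2 : PSˣ) : PS) - 1 =
      ((g : PS) - 1) * ((g : PS) - 1) + (2 : PS) * ((g : PS) - 1) := by
    push_cast; noncomm_ring
  rw [h]
  exact ((hg.mul hg).anti (by omega)).add hg.two_mul

/-! ### Support and low-degree coefficients of powers of the Magnus units -/

/-- `P v c f` : `f` is supported on powers of the letter `v`, has constant
coefficient `1` and linear coefficient `c`. -/
def P (v : Fin 2) (c : ℤ) (f : PS) : Prop :=
  (∀ u : Word, f.coeff u ≠ 0 → u = List.replicate u.length v) ∧
    f.coeff [] = 1 ∧ f.coeff [v] = c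

lemma coeff_single_mul (f g : PS) (a : Fin 2) :
    (f * g).coeff [a] = f.coeff [] * g.coeff [a] + f.coeff [a] * g.coeff [] := by
  rw [mul_coeff]
  simp [Finset.sum_range_succ]

lemma P.mul {v : Fin 2} {c d : ℤ} {f g : PS} (hf : P v c f) (hg : P v d g) :
    P v (c + d) (f * g) := by
  obtain ⟨hfs, hf0, hf1⟩ := hf
  obtain ⟨hgs, hg0, hg1⟩ := hg
  refine ⟨?_, ?_, ?_⟩
  · intro u hu
    rw [mul_coeff] at hu
    obtain ⟨i, hi, hne⟩ := Finset.exists_ne_zero_of_sum_ne_zero hu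
    have h1 : f.coeff (u.take i) ≠ 0 := fun h => hne (by rw [h, zero_mul])
    have h2 : g.coeff (u.drop i) ≠ 0 := fun h => hne (by rw [h, mul_zero])
    have e1 := hfs _ h1
    have e2 := hgs _ h2
    conv_lhs => rw [← List.take_append_drop i u]
    rw [e1, e2, ← List.replicate_add]
    congr 1
    have h3 := List.take_append_drop i u
    have h4 := congrArg List.length h3
    rw [List.length_append] at h4
    omega
  · rw [coeff_nil_mul, hf0, hg0, one_mul]
  · rw [coeff_single_mul, hf0, hf1, hg0, hg1, one_mul, mul_one]; ring

lemma P_one (v : Fin 2) : P v 0 1 := by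
  refine ⟨fun u hu => ?_, by simp, by simp⟩
  simp only [one_coeff, ne_eq, ite_eq_right_iff, Classical.not_imp] at hu
  simp [hu.1]

lemma P_onePlusX (v : Fin 2) : P v 1 (1 + X v) := by
  refine ⟨fun u hu => ?_, by simp [onePlusX_coeff], ?_⟩
  · rw [onePlusX_coeff] at hu
    by_cases h1 : u = []
    · simp [h1]
    · by_cases h2 : u = [v]
      · simp [h2]
      · simp [h1, h2] at hu
  · rw [onePlusX_coeff]; simp

lemma P_invX (v : Fin 2) : P v (-1) (invX v) := by
  refine ⟨fun u hu => ?_, by simp, ?_⟩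
  · rw [invX_coeff] at hu
    by_cases h : u = List.replicate u.length v
    · exact h
    · simp [h] at hu
  · rw [invX_coeff]
    norm_num

lemma P_pow {v : Fin 2} {c : ℤ} {f : PS} (hf : P v c f) (n : ℕ) : P v (n * c) (f ^ n) := by
  induction n with
  | zero => simpa using P_one v
  | succ n ih =>
    have h := ih.mul hf
    have h2 : ((n : ℤ) * c + c) = ((n + 1 : ℕ) : ℤ) * c := by push_cast; ring
    rw [pow_succ]
    rwa [h2] at h

lemma P_U_zpow (v : Fin 2) (e : ℤ) : P v e ((U v ^ e : PSˣ) : PS) := by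
  cases e with
  | ofNat n =>
    show P v ((n : ℕ) : ℤ) ((U v ^ ((n : ℕ) : ℤ) : PSˣ) : PS)
    have h : ((U v ^ (n : ℤ) : PSˣ) : PS) = ((U v : PS)) ^ n := by
      rw [zpow_natCast, Units.val_pow_eq_pow_val]
    rw [h]
    have hU : (U v : PS) = 1 + X v := rfl
    rw [hU]
    have h2 := P_pow (P_onePlusX v) n
    rwa [mul_one] at h2
  | negSucc n =>
    have h : (U v ^ Int.negSucc n) = ((U v)⁻¹) ^ (n + 1) := by
      rw [zpow_negSucc, inv_pow]
    have hval : (((U v)⁻¹ : PSˣ) : PS) = invX v := rfl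
    rw [h, Units.val_pow_eq_pow_val, hval]
    have h2 : Int.negSucc n = ((n + 1 : ℕ) : ℤ) * (-1) := by
      rw [Int.negSucc_eq]; push_cast; ring
    rw [h2]
    exact P_pow (P_invX v) (n + 1)

/-! ### The Magnus homomorphism and the key coefficient computation -/

def phi : F2 →* PSˣ := FreeGroup.lift fun v => U v

lemma not_chain'_replicate (v : Fin 2) {k : ℕ} (hk : 2 ≤ k) :
    ¬ List.Chain' (· ≠ ·) (List.replicate k v) := by
  obtain ⟨m, rfl⟩ : ∃ m, k = m + 2 := ⟨k - 2, by omega⟩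
  rw [show m + 2 = (m + 1) + 1 by ring, List.replicate_succ, List.replicate_succ]
  intro h
  exact (List.isChain_cons_cons.1 h).1 rfl

lemma coeff_mul_pow (v : Fin 2) (A B : PS)
    (hB : ∀ u : Word, B.coeff u ≠ 0 → u = List.replicate u.length v)
    (w : Word) (a : Fin 2) (hu : List.Chain' (· ≠ ·) (w ++ [a])) :
    (A * B).coeff (w ++ [a]) =
      A.coeff (w ++ [a]) * B.coeff [] + A.coeff w * B.coeff [a] := by
  rw [mul_coeff]
  have hlen : (w ++ [a]).length = w.length + 1 := by simp
  rw [hlen, Finset.sum_range_succ, Finset.sum_range_succ]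
  have h1 : ∀ i ∈ Finset.range w.length,
      A.coeff ((w ++ [a]).take i) * B.coeff ((w ++ [a]).drop i) = 0 := by
    intro i hi
    simp only [Finset.mem_range] at hi
    by_cases hz : B.coeff ((w ++ [a]).drop i) = 0
    · rw [hz, mul_zero]
    · exfalso
      have hrep := hB _ hz
      have hdl : ((w ++ [a]).drop i).length = w.length + 1 - i := by
        rw [List.length_drop, hlen]
      have hchain : List.Chain' (· ≠ ·) ((w ++ [a]).drop i) :=
        hu.suffix (List.drop_suffix i _)
      rw [hrep] at hchain
      exact not_chain'_replicate v (by omega : 2 ≤ ((w ++ [a]).drop i).length) hchain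
  rw [Finset.sum_eq_zero h1]
  have htw : (w ++ [a]).take w.length = w := List.take_left' rfl
  have hdw : (w ++ [a]).drop w.length = [a] := List.drop_left' rfl
  have htw1 : (w ++ [a]).take (w.length + 1) = w ++ [a] := by
    apply List.take_of_length_le; simp
  have hdw1 : (w ++ [a]).drop (w.length + 1) = [] := by
    apply List.drop_of_length_le; simp
  rw [htw, hdw, htw1, hdw1]
  ring

def sylProd (s : List (Fin 2 × ℤ)) : F2 := (s.map fun p => FreeGroup.of p.1 ^ p.2).prod

lemma main_coeff (s : List (Fin 2 × ℤ)) :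
    List.Chain' (fun p q => p.1 ≠ q.1) s → ∀ u : Word, List.Chain' (· ≠ ·) u →
    s.map Prod.fst <+: u →
    ((phi (sylProd s) : PSˣ) : PS).coeff u =
      if u = s.map Prod.fst then (s.map Prod.snd).prod else 0 := by
  induction s using List.reverseRecOn with
  | nil =>
    intro _ u _ _
    simp [sylProd, phi]
  | append_singleton s' p ih =>
    obtain ⟨v, e⟩ := p
    intro hs u hu hp
    have hs' : List.Chain' (fun p q : Fin 2 × ℤ => p.1 ≠ q.1) s' :=
      hs.prefix ⟨[(v, e)], rfl⟩
    have hmapfst : (s' ++ [(v, e)]).map Prod.fst = s'.map Prod.fst ++ [v] := by simp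
    rw [hmapfst] at hp ⊢
    have hprod : sylProd (s' ++ [(v, e)]) = sylProd s' * FreeGroup.of v ^ e := by
      simp [sylProd]
    have hof : phi (FreeGroup.of v) = U v := by simp [phi]
    have hval : ((phi (sylProd (s' ++ [(v, e)])) : PSˣ) : PS) =
        ((phi (sylProd s') : PSˣ) : PS) * ((U v ^ e : PSˣ) : PS) := by
      rw [hprod, map_mul, map_zpow, hof, Units.val_mul]
    rw [hval]
    rcases List.eq_nil_or_concat u with rfl | ⟨w, a, rfl⟩
    · exfalso
      have h1 := hp.length_le
      simp only [List.length_append, List.length_cons, List.length_nil] at h1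
      omega
    rw [List.concat_eq_append] at hu hp ⊢
    obtain ⟨hBsupp, hB0, hB1⟩ := P_U_zpow v e
    rw [coeff_mul_pow v _ _ hBsupp w a hu, hB0, mul_one]
    have hw_chain : List.Chain' (· ≠ ·) w := hu.prefix ⟨[a], rfl⟩
    by_cases hcase : w ++ [a] = s'.map Prod.fst ++ [v]
    · -- the main diagonal case
      have hlw : w.length = (s'.map Prod.fst).length := by
        have h0 := congrArg List.length hcase
        simp only [List.length_append, List.length_cons, List.length_nil] at h0
        omega
      obtain ⟨hw, ha⟩ := List.append_inj hcase hlw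
      have ha' : a = v := by simpa using ha
      rw [if_pos hcase]
      have hpr1 : s'.map Prod.fst <+: w ++ [a] := by rw [← hw]; exact ⟨[a], rfl⟩
      have h1 : ((phi (sylProd s') : PSˣ) : PS).coeff (w ++ [a]) = 0 := by
        rw [ih hs' (w ++ [a]) hu hpr1, if_neg (by rw [← hw]; simp)]
      have hpr2 : s'.map Prod.fst <+: w := by rw [hw]
      rw [h1, zero_add, ih hs' w hw_chain hpr2, if_pos hw, ha', hB1]
      simp
    · rw [if_neg hcase]
      have hL := hp.length_le
      have hNe : (s'.map Prod.fst ++ [v]).length ≠ (w ++ [a]).length := by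
        intro h
        exact hcase ((hp.eq_of_length h).symm)
      have hk : (s'.map Prod.fst).length + 1 ≤ w.length := by
        simp only [List.length_append, List.length_cons, List.length_nil] at hL hNe
        omega
      have hpre1 : s'.map Prod.fst <+: w ++ [a] :=
        (List.prefix_append (s'.map Prod.fst) [v]).trans hp
      have h1 : ((phi (sylProd s') : PSˣ) : PS).coeff (w ++ [a]) = 0 := by
        rw [ih hs' (w ++ [a]) hu hpre1]
        rw [if_neg (by
          intro h
          have h0 := congrArg List.length h
          simp only [List.length_append, List.length_cons, List.length_nil] at h0
          omega)]
      have hpre2 : s'.map Prod.fst ++ [v] <+: w :=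
        List.prefix_of_prefix_length_le hp ⟨[a], rfl⟩ (by
          simp only [List.length_append, List.length_cons, List.length_nil]
          omega)
      have hpre2' : s'.map Prod.fst <+: w := (List.prefix_append _ [v]).trans hpre2
      have h2 : ((phi (sylProd s') : PSˣ) : PS).coeff w = 0 := by
        rw [ih hs' w hw_chain hpre2']
        rw [if_neg (by
          intro h
          have h0 := congrArg List.length h
          omega)]
      rw [h1, h2, zero_mul, add_zero]

/-! ### Syllable decomposition of reduced words -/

/-- The "no cancelling pair" relation on letters of a word in the free group. -/
def R (p q : Fin 2 × Bool) : Prop := p.1 = q.1 → p.2 = q.2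

lemma chain'_reduce (L : List (Fin 2 × Bool)) : List.Chain' R (FreeGroup.reduce L) := by
  induction L with
  | nil => simp [FreeGroup.reduce, List.Chain']
  | cons x L ih =>
    rw [FreeGroup.reduce.cons]
    cases h : FreeGroup.reduce L with
    | nil => simp [List.Chain']
    | cons hd tl =>
      rw [h] at ih
      show List.Chain' R (if x.1 = hd.1 ∧ x.2 = !hd.2 then tl else x :: hd :: tl)
      by_cases hc : x.1 = hd.1 ∧ x.2 = !hd.2
      · rw [if_pos hc]
        exact ih.tail
      · rw [if_neg hc]
        refine List.isChain_cons_cons.2 ⟨?_, ih⟩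
        intro h1
        by_contra h2
        exact hc ⟨h1, by
          cases hx : x.2 <;> cases hh : hd.2 <;> simp_all⟩

lemma chain'_toWord (w : F2) : List.Chain' R w.toWord := by
  rw [← FreeGroup.reduce_toWord]
  exact chain'_reduce _

def eps (b : Bool) : ℤ := if b then 1 else -1

lemma eps_ne_zero (b : Bool) : eps b ≠ 0 := by cases b <;> simp [eps]

lemma of_zpow_eps (i : Fin 2) (b : Bool) : FreeGroup.of i ^ eps b = FreeGroup.mk [(i, b)] := by
  cases b
  · show FreeGroup.of i ^ (-1 : ℤ) = _
    rw [zpow_neg_one]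
    show (FreeGroup.mk [(i, true)])⁻¹ = _
    rw [FreeGroup.inv_mk]
    rfl
  · show FreeGroup.of i ^ (1 : ℤ) = _
    rw [zpow_one]
    rfl

def toSylls : List (Fin 2 × Bool) → List (Fin 2 × ℤ)
  | [] => []
  | (i, b) :: t =>
    match toSylls t with
    | [] => [(i, eps b)]
    | (j, e) :: s' => if i = j then (i, e + eps b) :: s' else (i, eps b) :: (j, e) :: s'

lemma sylProd_cons (p : Fin 2 × ℤ) (s : List (Fin 2 × ℤ)) :
    sylProd (p :: s) = FreeGroup.of p.1 ^ p.2 * sylProd s := by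
  simp [sylProd]

lemma toSylls_spec : ∀ L : List (Fin 2 × Bool), List.Chain' R L →
    sylProd (toSylls L) = FreeGroup.mk L ∧
    List.Chain' (fun p q : Fin 2 × ℤ => p.1 ≠ q.1) (toSylls L) ∧
    (∀ p ∈ toSylls L, p.2 ≠ 0) ∧
    (∀ i b t, L = (i, b) :: t → ∃ e s', toSylls L = (i, e) :: s' ∧ (0 < e ↔ b = true)) := by
  intro L
  induction L with
  | nil =>
    intro _
    refine ⟨by simp [sylProd, toSylls, FreeGroup.one_eq_mk], by simp [toSylls, List.Chain'], ?_, ?_⟩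
    · simp [toSylls]
    · intro i b t h; cases h
  | cons x t ih =>
    obtain ⟨i, b⟩ := x
    intro hL
    have hhead := (List.isChain_cons.1 hL).1
    have htail := (List.isChain_cons.1 hL).2
    obtain ⟨ihprod, ihchain, ihnz, ihcons⟩ := ih htail
    have hmk : FreeGroup.mk ((i, b) :: t) = FreeGroup.mk [(i, b)] * FreeGroup.mk t := by
      rw [FreeGroup.mul_mk]; rfl
    cases t with
    | nil =>
      have h0 : toSylls [(i, b)] = [(i, eps b)] := rfl
      refine ⟨?_, by simp [h0, List.Chain'], ?_, ?_⟩
      · rw [h0, sylProd_cons]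
        show FreeGroup.of i ^ eps b * sylProd [] = _
        rw [of_zpow_eps]
        simp [sylProd]
      · rw [h0]
        rintro p hp
        simp at hp
        rw [hp]
        exact eps_ne_zero b
      · intro i' b' t' h
        injection h with h1 h2
        injection h1 with h3 h4
        subst h3; subst h4; subst h2
        refine ⟨eps b, [], h0, by cases b <;> simp [eps]⟩
    | cons q t' =>
      obtain ⟨j', c⟩ := q
      obtain ⟨e, s', hts, hsign⟩ := ihcons j' c t' rfl
      have hnz_e : e ≠ 0 := ihnz (j', e) (by rw [hts]; exact List.mem_cons_self)
      have hunfold : toSylls ((i, b) :: (j', c) :: t') =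
          if i = j' then (i, e + eps b) :: s' else (i, eps b) :: (j', e) :: s' := by
        show (match toSylls ((j', c) :: t') with
          | [] => [(i, eps b)]
          | (j, e) :: s' => if i = j then (i, e + eps b) :: s' else (i, eps b) :: (j, e) :: s') = _
        rw [hts]
      rw [hts] at ihprod ihchain ihnz
      by_cases hij : i = j'
      · subst hij
        have hbc : b = c := hhead (i, c) rfl rfl
        subst hbc
        rw [if_pos rfl] at hunfold
        have hsign' : (0 < e + eps b ↔ b = true) ∧ e + eps b ≠ 0 := by
          cases b <;> simp [eps] at hsign ⊢ <;> omega
        refine ⟨?_, ?_, ?_, ?_⟩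
        · rw [hunfold, sylProd_cons]
          show FreeGroup.of i ^ (e + eps b) * sylProd s' = _
          rw [hmk, ← ihprod, sylProd_cons]
          rw [← of_zpow_eps]
          show _ = FreeGroup.of i ^ eps b * (FreeGroup.of i ^ e * sylProd s')
          rw [add_comm e (eps b), zpow_add, mul_assoc]
        · rw [hunfold]
          exact List.isChain_cons.2 ⟨fun y hy => (List.isChain_cons.1 ihchain).1 y hy,
            (List.isChain_cons.1 ihchain).2⟩
        · rw [hunfold]
          rintro p hp
          rcases List.mem_cons.1 hp with rfl | hp'
          · exact hsign'.2
          · exact ihnz p (List.mem_cons_of_mem _ hp')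
        · intro i' b' t'' h
          injection h with h1 h2
          injection h1 with h3 h4
          subst h3; subst h4
          exact ⟨e + eps b, s', hunfold, hsign'.1⟩
      · rw [if_neg hij] at hunfold
        refine ⟨?_, ?_, ?_, ?_⟩
        · rw [hunfold, sylProd_cons]
          show FreeGroup.of i ^ eps b * sylProd ((j', e) :: s') = _
          rw [hmk, ← ihprod, of_zpow_eps]
        · rw [hunfold]
          exact List.isChain_cons_cons.2 ⟨hij, ihchain⟩
        · rw [hunfold]
          rintro p hp
          rcases List.mem_cons.1 hp with rfl | hp'
          · exact eps_ne_zero b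
          · exact ihnz p hp'
        · intro i' b' t'' h
          injection h with h1 h2
          injection h1 with h3 h4
          subst h3; subst h4
          refine ⟨eps b, (j', e) :: s', hunfold, by cases b <;> simp [eps]⟩

/-- Every nontrivial element of the free group is the product of a nonempty
alternating list of syllables with nonzero exponents. -/
lemma exists_syllables (w : F2) (hw : w ≠ 1) :
    ∃ s : List (Fin 2 × ℤ), s ≠ [] ∧
      List.Chain' (fun p q : Fin 2 × ℤ => p.1 ≠ q.1) s ∧
      (∀ p ∈ s, p.2 ≠ 0) ∧ sylProd s = w := by
  have hL : w.toWord ≠ [] := fun h => hw (FreeGroup.toWord_eq_nil_iff.1 h)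
  obtain ⟨hprod, hchain, hnz, hcons⟩ := toSylls_spec w.toWord (chain'_toWord w)
  refine ⟨toSylls w.toWord, ?_, hchain, hnz, by rw [hprod, FreeGroup.mk_toWord]⟩
  cases h : w.toWord with
  | nil => exact absurd h hL
  | cons q t =>
    obtain ⟨i, b⟩ := q
    obtain ⟨e, s', hts, _⟩ := hcons i b t h
    rw [← h, hts]
    simp

/-! ### Trapping the iterated square subgroups in the filtration -/

lemma sub_one_coeff (f : PS) (u : Word) (hu : u ≠ []) :
    (f - 1).coeff u = f.coeff u := by
  rw [sub_eq_add_neg, add_coeff, neg_coeff, one_coeff, if_neg hu]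
  ring

lemma range_le_G1 (w : F2) : phi w ∈ G 1 := by
  induction w using FreeGroup.induction_on with
  | C1 => rw [map_one]; exact one_mem _
  | of x =>
    show phi (FreeGroup.of x) ∈ G 1
    have h : phi (FreeGroup.of x) = U x := by simp [phi]
    rw [h, mem_G]
    have h2 : ((U x : PSˣ) : PS) - 1 = X x := by
      show (1 + X x) - 1 = X x
      noncomm_ring
    rw [h2]
    intro u
    by_cases hu : u = [x]
    · subst hu
      simp
    · simp [hu]
  | inv_of x ih => rw [map_inv]; exact inv_mem ih
  | mul x y ihx ihy => rw [map_mul]; exact mul_mem ihx ihy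

lemma gamma_map : ∀ n : ℕ, (Gamma (n + 1)).map phi ≤ G (n + 1) := by
  intro n
  induction n with
  | zero =>
    rintro g ⟨w, _, rfl⟩
    exact range_le_G1 w
  | succ n ih =>
    have h : Gamma (n + 2) = (sqNormal (Gamma (n + 1))).map (Gamma (n + 1)).subtype := rfl
    rw [h, Subgroup.map_map, Subgroup.map_le_iff_le_comap]
    apply Subgroup.normalClosure_le_normal
    rintro x ⟨g, rfl⟩
    rw [SetLike.mem_coe, Subgroup.mem_comap, map_pow]
    refine sq_mem_G (by omega) (ih ?_)
    exact Subgroup.mem_map_of_mem phi g.2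

end MagnusAux







open MagnusAux in
/-- The iterated square subgroups of the free group `F₂` have trivial intersection:
`⋂_{n ≥ 1} Γ_n = {1}`. -/
theorem iInf_Gamma_eq_bot : (⨅ n : ℕ, Gamma (n + 1)) = ⊥ := by
  rw [eq_bot_iff]
  intro w hw
  rw [Subgroup.mem_bot]
  by_contra hne
  obtain ⟨s, hsne, hchain, hnz, hprod⟩ := exists_syllables w hne
  set p : Word := s.map Prod.fst with hp
  have hplen : 1 ≤ p.length := by
    rw [hp, List.length_map]
    exact List.length_pos_iff.2 hsne
  have hpne : p ≠ [] := by
    intro h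
    rw [h] at hplen
    simp at hplen
  have hpchain : List.Chain' (· ≠ ·) p := by
    rw [hp]
    exact (List.isChain_map _).2 hchain
  have hcoeff : ((phi w : PSˣ) : PS).coeff p = (s.map Prod.snd).prod := by
    rw [← hprod, main_coeff s hchain p hpchain (List.prefix_refl p), if_pos rfl]
  have hPne : (s.map Prod.snd).prod ≠ 0 := by
    refine List.prod_ne_zero fun h0 => ?_
    obtain ⟨q, hq, hq0⟩ := List.mem_map.1 h0
    exact hnz q hq hq0
  have hdvd : ∀ t : ℕ, (2 : ℤ) ^ t ∣ (s.map Prod.snd).prod := by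
    intro t
    have hmem : w ∈ Gamma (p.length + t + 1) := Subgroup.mem_iInf.1 hw (p.length + t)
    have hG : phi w ∈ G (p.length + t + 1) :=
      gamma_map (p.length + t) (Subgroup.mem_map_of_mem phi hmem)
    have hJ := (mem_G.1 hG) p
    rw [sub_one_coeff _ _ hpne, hcoeff] at hJ
    refine dvd_trans (pow_dvd_pow 2 ?_) hJ
    omega
  have habs : |(s.map Prod.snd).prod| < (2 : ℤ) ^ ((s.map Prod.snd).prod.natAbs) := by
    rw [Int.abs_eq_natAbs]
    have := Nat.lt_two_pow_self (n := (s.map Prod.snd).prod.natAbs)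
    exact_mod_cast this
  exact hPne (Int.eq_zero_of_abs_lt_dvd (hdvd _) habs)
end
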